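/- arXiv:1910.14527 — 7 statements merged into one kernel-verified Lean document; each statement's English description precedes it below -/
import Mathlib

section
/- Let d be a positive integer and let Ω ⊆ ℝ^d be a locally compact set. Let φ be any gauge and let ψ be a gauge with liminf_{r→0+} ψ(r)/r^{d-1} = 0. Then for a typical function f ∈ C(Ω) (i.e., for all f in some comeager subset of C(Ω)), the lower box-counting measure ν^ψ of the set {x ∈ Ω : lip_φ f(x) > 0} is zero. -/
open Filter Set Topology MeasureTheory
open scoped ENNReal NNReal

noncomputable section

/-- A gauge: nondecreasing on `[0,∞)`, right-continuous, `φ 0 = 0`, positive on `(0,∞)`. -/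
def IsGauge (φ : ℝ → ℝ) : Prop :=
  (∀ ⦃a b : ℝ⦄, 0 ≤ a → a ≤ b → φ a ≤ φ b) ∧
  (∀ a : ℝ, 0 ≤ a → ContinuousWithinAt φ (Set.Ici a) a) ∧
  φ 0 = 0 ∧ (∀ r : ℝ, 0 < r → 0 < φ r)

/-- `N_δ(E)`: the least number of sets of diameter at most `δ` needed to cover `E`. -/
def coverNum {X : Type*} [PseudoMetricSpace X] (δ : ℝ) (E : Set X) : ℝ≥0∞ :=
  ⨅ (n : ℕ) (_ : ∃ F : Fin n → Set X,
    (∀ i, EMetric.diam (F i) ≤ ENNReal.ofReal δ) ∧ E ⊆ ⋃ i, F i), (n : ℝ≥0∞)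

/-- `ν_0^ζ(E) = liminf_{δ→0+} N_δ(E)·ζ(δ)`. -/
def nu0 {X : Type*} [PseudoMetricSpace X] (ζ : ℝ → ℝ) (E : Set X) : ℝ≥0∞ :=
  Filter.liminf (fun δ : ℝ => coverNum δ E * ENNReal.ofReal (ζ δ)) (𝓝[>] (0:ℝ))

/-- The lower box-counting measure `ν^ζ`. -/
def lowerBoxMeasure {X : Type*} [PseudoMetricSpace X] (ζ : ℝ → ℝ) (E : Set X) : ℝ≥0∞ :=
  ⨅ (G : ℕ → Set X) (_ : E ⊆ ⋃ n, G n), ∑' n, nu0 ζ (G n)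

/-- The lower box dimension `lbdim E = liminf_{r→0+} log N_r(E)/|log r|`. -/
def lbdim {X : Type*} [PseudoMetricSpace X] (E : Set X) : EReal :=
  Filter.liminf (fun r : ℝ => ENNReal.log (coverNum r E) * ((|Real.log r|⁻¹ : ℝ) : EReal))
    (𝓝[>] (0:ℝ))

/-- The lower packing dimension. -/
def lpdim {X : Type*} [PseudoMetricSpace X] (E : Set X) : EReal :=
  ⨅ (G : ℕ → Set X) (_ : E ⊆ ⋃ n, G n), ⨆ n, lbdim (G n)

/-- The generalized lower scaled oscillation `lip_φ f`. -/
def lipGauge {X : Type*} [PseudoMetricSpace X] (φ : ℝ → ℝ) (f : X → ℝ) (x : X) : ℝ≥0∞ :=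
  Filter.liminf
    (fun r : ℝ => EMetric.diam (f '' Metric.closedBall x r) / ENNReal.ofReal (φ r))
    (𝓝[>] (0:ℝ))

/-- The upper scaled oscillation `Lip f`. -/
def LipGauge {X : Type*} [PseudoMetricSpace X] (φ : ℝ → ℝ) (f : X → ℝ) (x : X) : ℝ≥0∞ :=
  Filter.limsup
    (fun r : ℝ => EMetric.diam (f '' Metric.closedBall x r) / ENNReal.ofReal (φ r))
    (𝓝[>] (0:ℝ))

/-- The Hausdorff measure with gauge `ξ`. -/
def hausdorffGauge {X : Type*} [PseudoMetricSpace X] (ξ : ℝ → ℝ) (E : Set X) : ℝ≥0∞ :=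
  ⨆ (δ : ℝ) (_ : 0 < δ), ⨅ (G : ℕ → Set X) (_ : E ⊆ ⋃ n, G n)
    (_ : ∀ n, EMetric.diam (G n) ≤ ENNReal.ofReal δ),
    ∑' n, ENNReal.ofReal (ξ (EMetric.diam (G n)).toReal)

/-- A box in `ℝ^k`. -/
def IsBox {k : ℕ} (S : Set (EuclideanSpace ℝ (Fin k))) : Prop :=
  ∃ a b : Fin k → ℝ, S = {x | ∀ i, x i ∈ Set.Icc (a i) (b i)}

/-- A microscopic subset of `ℝ^k`. -/
def Microscopic {k : ℕ} (X : Set (EuclideanSpace ℝ (Fin k))) : Prop :=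
  ∀ ε : ℝ, 0 < ε → ∃ B : ℕ → Set (EuclideanSpace ℝ (Fin k)),
    (∀ n, IsBox (B n)) ∧ X ⊆ ⋃ n, B n ∧
    ∀ n, MeasureTheory.volume (B n) ≤ ENNReal.ofReal (ε ^ (n + 1))

/-- A microscopic subset of `ℝ`. -/
def MicroscopicR (E : Set ℝ) : Prop :=
  ∀ ε : ℝ, 0 < ε → ∃ I : ℕ → ℝ × ℝ,
    E ⊆ ⋃ n, Set.Icc (I n).1 (I n).2 ∧
    ∀ n, MeasureTheory.volume (Set.Icc (I n).1 (I n).2) ≤ ENNReal.ofReal (ε ^ (n + 1))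

end

set_option maxHeartbeats 1000000

noncomputable section
namespace BP

/-! ### The scalar flattening map -/

/-- flattening map on ℝ: constant on `[k s, k s + s - 4 w]`, ramps up on the rest of the cell. -/
def theta (s w t : ℝ) : ℝ :=
  t + ((s / (4 * w)) * max 0 (s * Int.fract (t / s) - (s - 4 * w)) - s * Int.fract (t / s))

lemma continuous_theta {s w : ℝ} (hw : 0 < w) (hsw : 8 * w ≤ s) :
    Continuous (theta s w) := by
  have hs : 0 < s := lt_of_lt_of_le (by linarith) hsw
  have hH : Continuous (fun u : ℝ => (s / (4 * w)) * max 0 (s * u - (s - 4 * w)) - s * u) := by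
    exact (continuous_const.mul ((continuous_const.max ((continuous_const.mul continuous_id).sub
      continuous_const)))).sub (continuous_const.mul continuous_id)
  have h01 : (fun u : ℝ => (s / (4 * w)) * max 0 (s * u - (s - 4 * w)) - s * u) 0
      = (fun u : ℝ => (s / (4 * w)) * max 0 (s * u - (s - 4 * w)) - s * u) 1 := by
    simp only [mul_zero, mul_one, zero_sub, sub_zero]
    rw [max_eq_left (by linarith), max_eq_right (by linarith)]
    field_simp
    ring
  have hcomp : Continuous ((fun u : ℝ => (s / (4 * w)) * max 0 (s * u - (s - 4 * w)) - s * u)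
      ∘ Int.fract) := ContinuousOn.comp_fract'' hH.continuousOn h01
  have : Continuous fun t : ℝ =>
      ((fun u : ℝ => (s / (4 * w)) * max 0 (s * u - (s - 4 * w)) - s * u) ∘ Int.fract) (t / s) :=
    hcomp.comp (continuous_id.div_const s)
  exact continuous_id.add this

lemma abs_theta_sub {s w : ℝ} (hw : 0 < w) (hsw : 8 * w ≤ s) (t : ℝ) :
    |theta s w t - t| ≤ s := by
  have hs : 0 < s := lt_of_lt_of_le (by linarith) hsw
  have hu0 : 0 ≤ Int.fract (t / s) := Int.fract_nonneg _
  have hu1 : Int.fract (t / s) < 1 := Int.fract_lt_one _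
  set u := Int.fract (t / s)
  have ha0 : 0 ≤ (s / (4 * w)) * max 0 (s * u - (s - 4 * w)) :=
    mul_nonneg (by positivity) (le_max_left _ _)
  have ha1 : (s / (4 * w)) * max 0 (s * u - (s - 4 * w)) ≤ s := by
    have hmax : max 0 (s * u - (s - 4 * w)) ≤ 4 * w := by
      apply max_le (by linarith)
      nlinarith
    calc (s / (4 * w)) * max 0 (s * u - (s - 4 * w)) ≤ (s / (4 * w)) * (4 * w) :=
          mul_le_mul_of_nonneg_left hmax (by positivity)
      _ = s := by field_simp
  have hb0 : 0 ≤ s * u := by positivity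
  have hb1 : s * u ≤ s := by nlinarith
  have : theta s w t - t = (s / (4 * w)) * max 0 (s * u - (s - 4 * w)) - s * u := by
    simp only [theta, u]
    ring
  rw [this, abs_le]
  constructor <;> linarith

lemma theta_const {s w : ℝ} (hw : 0 < w) (hsw : 8 * w ≤ s) {t : ℝ}
    (hgood : ∀ k : ℤ, 5 * w < |t - k * s|) {t' : ℝ} (ht' : |t' - t| ≤ w) :
    theta s w t' = s * ⌊t / s⌋ := by
  have hs : 0 < s := lt_of_lt_of_le (by linarith) hsw
  set k : ℤ := ⌊t / s⌋ with hk
  have h1 : (k : ℝ) * s ≤ t := by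
    have := Int.floor_le (t / s)
    calc (k : ℝ) * s ≤ (t / s) * s := by nlinarith
      _ = t := by field_simp
  have h2 : t < ((k : ℝ) + 1) * s := by
    have := Int.lt_floor_add_one (t / s)
    calc t = (t / s) * s := by field_simp
      _ < ((k : ℝ) + 1) * s := by nlinarith
  have hg1 : (k : ℝ) * s + 5 * w < t := by
    have := hgood k
    rw [abs_of_nonneg (by linarith)] at this
    linarith
  have hg2 : t < ((k : ℝ) + 1) * s - 5 * w := by
    have := hgood (k + 1)
    rw [abs_of_nonpos (by push_cast; linarith)] at this
    push_cast at this ⊢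
    linarith
  have ht'1 : (k : ℝ) * s + 4 * w < t' := by cases abs_le.1 ht'; linarith
  have ht'2 : t' < ((k : ℝ) + 1) * s - 4 * w := by cases abs_le.1 ht'; linarith
  have hfk : ⌊t' / s⌋ = k := by
    rw [Int.floor_eq_iff]
    constructor
    · rw [le_div_iff₀ hs]; nlinarith
    · rw [div_lt_iff₀ hs]; push_cast; nlinarith
  have hfr : s * Int.fract (t' / s) = t' - k * s := by
    rw [Int.fract, hfk]
    field_simp
  have hmax : max 0 (s * Int.fract (t' / s) - (s - 4 * w)) = 0 := by
    rw [hfr]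
    apply max_eq_left
    nlinarith
  rw [theta, hmax, hfr]
  ring

/-! ### The flattening map on Euclidean space, and the bad set -/

variable {d : ℕ}

abbrev Euc (d : ℕ) := EuclideanSpace ℝ (Fin d)

/-- coordinate distance bounded by euclidean distance -/
lemma coord_dist_le (x y : Euc d) (i : Fin d) : |x i - y i| ≤ dist x y := by
  have h := EuclideanSpace.dist_eq x y
  rw [h]
  have h1 : |x i - y i| = Real.sqrt (dist (x i) (y i) ^ 2) := by
    rw [Real.dist_eq, Real.sqrt_sq_eq_abs, abs_abs]
  rw [h1]
  apply Real.sqrt_le_sqrt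
  exact Finset.single_le_sum (fun j _ => sq_nonneg (dist (x j) (y j))) (Finset.mem_univ i)

/-- euclidean distance bounded by max coordinate distance times d -/
lemma dist_le_coord (x y : Euc d) (c : ℝ) (hc : 0 ≤ c) (h : ∀ i, |x i - y i| ≤ c) :
    dist x y ≤ c * d := by
  rw [EuclideanSpace.dist_eq]
  have : ∑ i : Fin d, dist (x i) (y i) ^ 2 ≤ ∑ _i : Fin d, c ^ 2 := by
    apply Finset.sum_le_sum
    intro j _
    have := h j
    rw [Real.dist_eq]
    nlinarith [abs_nonneg (x j - y j)]
  calc Real.sqrt (∑ i : Fin d, dist (x i) (y i) ^ 2) ≤ Real.sqrt (∑ _i : Fin d, c ^ 2) :=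
        Real.sqrt_le_sqrt this
    _ = Real.sqrt (d * c ^ 2) := by rw [Finset.sum_const]; simp [mul_comm]
    _ ≤ Real.sqrt ((c * d) ^ 2) := by
        apply Real.sqrt_le_sqrt
        have hdd : (d : ℝ) ≤ (d : ℝ) ^ 2 := by
          have := Nat.le_self_pow (two_ne_zero) d
          exact_mod_cast this
        nlinarith [sq_nonneg c]
    _ = c * d := Real.sqrt_sq (by positivity)

def Theta (s w : ℝ) (x : Euc d) : Euc d := WithLp.toLp 2 (fun i => theta s w (x i))

lemma continuous_Theta {s w : ℝ} (hw : 0 < w) (hsw : 8 * w ≤ s) :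
    Continuous (Theta s w (d := d)) := by
  have he : Continuous (PiLp.continuousLinearEquiv 2 ℝ (fun _ : Fin d => ℝ)) :=
    (PiLp.continuousLinearEquiv 2 ℝ _).continuous
  have he' : Continuous (PiLp.continuousLinearEquiv 2 ℝ (fun _ : Fin d => ℝ)).symm :=
    (PiLp.continuousLinearEquiv 2 ℝ _).symm.continuous
  have hmid : Continuous (fun v : Fin d → ℝ => fun i => theta s w (v i)) :=
    continuous_pi fun i => (continuous_theta hw hsw).comp (continuous_apply i)
  exact he'.comp (hmid.comp he)

lemma dist_Theta_le {s w : ℝ} (hw : 0 < w) (hsw : 8 * w ≤ s) (x : Euc d) :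
    dist (Theta s w x) x ≤ s * d := by
  have hs : 0 < s := lt_of_lt_of_le (by linarith) hsw
  exact dist_le_coord _ _ s hs.le fun i => abs_theta_sub hw hsw (x i)

/-- The bad set: points with some coordinate near the grid `s ℤ`. -/
def BadSet {d : ℕ} (s w : ℝ) : Set (Euc d) := {x | ∃ i : Fin d, ∃ k : ℤ, |x i - k * s| ≤ 5 * w}

lemma Theta_const {s w : ℝ} (hw : 0 < w) (hsw : 8 * w ≤ s) {x : Euc d}
    (hx : x ∉ BadSet s w) {y : Euc d} (hy : dist y x ≤ w) :
    Theta s w y = Theta s w x := by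
  have hgood : ∀ i : Fin d, ∀ k : ℤ, 5 * w < |x i - k * s| := by
    intro i k
    by_contra h
    exact hx ⟨i, k, le_of_not_gt h⟩
  ext i
  have h1 : theta s w (y i) = s * ⌊x i / s⌋ :=
    theta_const hw hsw (hgood i) (le_trans (coord_dist_le y x i) hy)
  have h2 : theta s w (x i) = s * ⌊x i / s⌋ :=
    theta_const hw hsw (hgood i) (by simpa using hw.le)
  simp only [Theta, PiLp.toLp_apply]
  rw [h1, h2]

/-! ### Covering number lemmas -/

variable {X : Type*} [PseudoMetricSpace X]

lemma coverNum_mono_set {δ : ℝ} {E E' : Set X} (h : E ⊆ E') :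
    coverNum δ E ≤ coverNum δ E' := by
  apply le_iInf₂
  intro n hn
  obtain ⟨F, hF1, hF2⟩ := hn
  exact iInf₂_le n ⟨F, hF1, h.trans hF2⟩

lemma coverNum_le_card {δ : ℝ} {E : Set X} {ι : Type*} [Fintype ι] (C : ι → Set X)
    (hC : ∀ i, EMetric.diam (C i) ≤ ENNReal.ofReal δ) (hE : E ⊆ ⋃ i, C i) :
    coverNum δ E ≤ (Fintype.card ι : ℝ≥0∞) := by
  refine le_trans (iInf₂_le (Fintype.card ι) ?_) le_rfl
  refine ⟨fun j => C ((Fintype.equivFin ι).symm j), fun j => hC _, ?_⟩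
  intro x hx
  obtain ⟨i, hi⟩ := mem_iUnion.1 (hE hx)
  exact mem_iUnion.2 ⟨Fintype.equivFin ι i, by simpa using hi⟩

lemma coverNum_le_label {δ : ℝ} {E : Set X} {L : Type*} [DecidableEq L] (lab : X → L)
    (F : Finset L) (hmem : ∀ x ∈ E, lab x ∈ F)
    (hfib : ∀ x ∈ E, ∀ y ∈ E, lab x = lab y → edist x y ≤ ENNReal.ofReal δ) :
    coverNum δ E ≤ (F.card : ℝ≥0∞) := by
  have := coverNum_le_card (ι := F) (E := E) (δ := δ)
    (fun z => {x | x ∈ E ∧ lab x = (z : L)}) ?_ ?_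
  · simpa [Fintype.card_coe] using this
  · intro z
    apply EMetric.diam_le
    intro x hx y hy
    exact hfib x hx.1 y hy.1 (hx.2.trans hy.2.symm)
  · intro x hx
    exact mem_iUnion.2 ⟨⟨lab x, hmem x hx⟩, hx, rfl⟩

lemma card_Icc_le {a b : ℤ} {c : ℝ} (hc : 0 ≤ c) (h : (b : ℝ) + 1 - a ≤ c) :
    ((Finset.Icc a b).card : ℝ) ≤ c := by
  rw [Int.card_Icc]
  rcases le_or_gt (b + 1 - a) 0 with h0 | h0
  · rw [Int.toNat_of_nonpos h0]; simpa
  · have hcast : (((b + 1 - a).toNat : ℕ) : ℝ) = (b : ℝ) + 1 - a := by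
      rw [← Int.cast_natCast, Int.toNat_of_nonneg h0.le]
      push_cast
      ring
    rw [hcast]
    exact h

/-! ### The main counting lemma -/

lemma count_bad {d : ℕ} (hd : 0 < d) {R s w : ℝ} (hR : 1 ≤ R) (hw : 0 < w)
    (hw2 : w ≤ 1 / 16) (hws : w ≤ s) (hs : s ≤ 1) :
    ∃ N : ℕ, coverNum w (Metric.closedBall (0 : Euc d) R ∩ BadSet s w) ≤ (N : ℝ≥0∞) ∧
      (N : ℝ) ≤ 13 * R / s * ((10 * d + 2) * (3 * R * d / w) ^ (d - 1)) * d := by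
  classical
  have hs0 : 0 < s := lt_of_lt_of_le hw hws
  have hd0 : (0 : ℝ) < d := by exact_mod_cast hd
  set ℓ : ℝ := w / d with hℓdef
  have hℓ : 0 < ℓ := by positivity
  have hℓd : ℓ * d = w := by rw [hℓdef]; field_simp
  set lab : Euc d → (Fin d → ℤ) := fun x i => ⌊x i / ℓ⌋ with hlab
  set K : ℤ := ⌊(R + 5 * w) / s⌋ with hK
  set zl : ℤ := ⌊-R / ℓ⌋ with hzl
  set zh : ℤ := ⌊R / ℓ⌋ with hzh
  set Ii : Fin d → ℤ → Finset (Fin d → ℤ) := fun i k =>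
    Fintype.piFinset (fun m =>
      if m = i then Finset.Icc ⌊((k : ℝ) * s - 5 * w) / ℓ⌋ ⌊((k : ℝ) * s + 5 * w) / ℓ⌋
      else Finset.Icc zl zh) with hIi
  set F : Finset (Fin d → ℤ) :=
    (Finset.univ : Finset (Fin d)).biUnion (fun i => (Finset.Icc (-K) K).biUnion (Ii i)) with hF
  have hKbound : ∀ (kk : ℤ) (xi : ℝ), |xi| ≤ R → |xi - kk * s| ≤ 5 * w →
      kk ∈ Finset.Icc (-K) K := by
    intro kk xi hxi hik
    have h1 : |(kk : ℝ) * s| ≤ R + 5 * w := by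
      rcases le_or_gt 0 ((kk : ℝ) * s) with hp | hp
      · rw [abs_of_nonneg hp]
        cases abs_le.1 hik with
        | intro hl hr => cases abs_le.1 hxi with
          | intro hl2 hr2 => linarith
      · rw [abs_of_neg hp]
        cases abs_le.1 hik with
        | intro hl hr => cases abs_le.1 hxi with
          | intro hl2 hr2 => linarith
    have h4 : |(kk : ℝ)| ≤ (R + 5 * w) / s := by
      rw [le_div_iff₀ hs0]
      calc |(kk : ℝ)| * s = |(kk : ℝ) * s| := by rw [abs_mul, abs_of_pos hs0]
        _ ≤ R + 5 * w := h1
    have h5 := abs_le.1 h4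
    simp only [Finset.mem_Icc]
    constructor
    · rw [neg_le]
      exact Int.le_floor.2 (by push_cast; linarith [h5.1])
    · exact Int.le_floor.2 (by push_cast; linarith [h5.2])
  have hcoordR : ∀ x : Euc d, x ∈ Metric.closedBall (0 : Euc d) R → ∀ m, |x m| ≤ R := by
    intro x hxb m
    have h := coord_dist_le x 0 m
    simp only [Metric.mem_closedBall] at hxb
    have h0 : (0 : Euc d) m = 0 := rfl
    rw [h0, sub_zero] at h
    exact h.trans hxb
  refine ⟨F.card, ?_, ?_⟩
  · -- covering bound
    apply coverNum_le_label lab F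
    · rintro x ⟨hxb, i, k, hik⟩
      have hxcoord := hcoordR x hxb
      simp only [hF, Finset.mem_biUnion, Finset.mem_univ, true_and]
      refine ⟨i, k, hKbound k (x i) (hxcoord i) hik, ?_⟩
      rw [hIi, Fintype.mem_piFinset]
      intro m
      by_cases hmi : m = i
      · subst hmi
        rw [if_pos rfl, Finset.mem_Icc]
        have h2 := abs_le.1 hik
        constructor
        · exact Int.floor_le_floor (by apply div_le_div_of_nonneg_right _ hℓ.le; linarith [h2.1])
        · exact Int.floor_le_floor (by apply div_le_div_of_nonneg_right _ hℓ.le; linarith [h2.2])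
      · rw [if_neg hmi, Finset.mem_Icc]
        have h3 := abs_le.1 (hxcoord m)
        constructor
        · exact Int.floor_le_floor (by apply div_le_div_of_nonneg_right _ hℓ.le; linarith [h3.1])
        · exact Int.floor_le_floor (by apply div_le_div_of_nonneg_right _ hℓ.le; linarith [h3.2])
    · intro x hx y hy hxy
      have hcoord : ∀ m, |x m - y m| ≤ ℓ := by
        intro m
        have hm : ⌊x m / ℓ⌋ = ⌊y m / ℓ⌋ := congrFun hxy m
        have h1 := Int.floor_le (x m / ℓ)
        have h2 := Int.lt_floor_add_one (x m / ℓ)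
        have h3 := Int.floor_le (y m / ℓ)
        have h4 := Int.lt_floor_add_one (y m / ℓ)
        rw [hm] at h1 h2
        have e : x m - y m = (x m / ℓ - y m / ℓ) * ℓ := by field_simp
        rw [abs_le]
        constructor
        · have hgt : -1 ≤ x m / ℓ - y m / ℓ := by linarith
          have h5 := mul_le_mul_of_nonneg_right hgt hℓ.le
          rw [← e] at h5
          linarith
        · have hlt : x m / ℓ - y m / ℓ ≤ 1 := by linarith
          have h5 := mul_le_mul_of_nonneg_right hlt hℓ.le
          rw [← e] at h5
          linarith
      have hdist : dist x y ≤ w := by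
        have := dist_le_coord x y ℓ hℓ.le hcoord
        rwa [hℓd] at this
      rw [edist_dist]
      exact ENNReal.ofReal_le_ofReal hdist
  · -- cardinality bound
    have hcard1 : (F.card : ℝ) ≤ ∑ i : Fin d, ∑ k ∈ Finset.Icc (-K) K, ((Ii i k).card : ℝ) := by
      have h1 : F.card ≤ ∑ i : Fin d, ((Finset.Icc (-K) K).biUnion (Ii i)).card :=
        Finset.card_biUnion_le
      have h2 : ∀ i : Fin d, ((Finset.Icc (-K) K).biUnion (Ii i)).card
          ≤ ∑ k ∈ Finset.Icc (-K) K, (Ii i k).card := fun i => Finset.card_biUnion_le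
      have h3 : F.card ≤ ∑ i : Fin d, ∑ k ∈ Finset.Icc (-K) K, (Ii i k).card :=
        h1.trans (Finset.sum_le_sum fun i _ => h2 i)
      exact_mod_cast h3
    have hG : ((Finset.Icc zl zh).card : ℝ) ≤ 3 * R * d / w := by
      apply card_Icc_le (by positivity)
      have h1 : (zh : ℝ) ≤ R / ℓ := Int.floor_le _
      have h2 : -R / ℓ - 1 ≤ (zl : ℝ) := by
        have := Int.lt_floor_add_one (-R / ℓ); linarith
      have h3 : R / ℓ = R * d / w := by rw [hℓdef]; field_simp
      have hd1 : (1 : ℝ) ≤ d := by exact_mod_cast hd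
      have hRd : (1 : ℝ) ≤ R * d := by
        nlinarith [mul_le_mul hR hd1 zero_le_one (by linarith : (0:ℝ) ≤ R)]
      have h6 : 2 ≤ R * d / w := by
        rw [le_div_iff₀ hw]
        nlinarith
      have h5 : -R / ℓ = -(R * d / w) := by rw [hℓdef]; field_simp
      rw [h3] at h1
      rw [h5] at h2
      have h7 : 3 * R * (d : ℝ) / w = 3 * (R * (d : ℝ) / w) := by ring
      rw [h7]
      linarith
    have hA : ∀ (i : Fin d) (k : ℤ),
        ((Ii i k).card : ℝ) ≤ (10 * d + 2) * (3 * R * d / w) ^ (d - 1) := by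
      intro i k
      have hcardpi : ((Ii i k).card : ℝ) = ∏ m : Fin d,
          ((if m = i then Finset.Icc ⌊((k : ℝ) * s - 5 * w) / ℓ⌋ ⌊((k : ℝ) * s + 5 * w) / ℓ⌋
            else Finset.Icc zl zh).card : ℝ) := by
        rw [hIi]; rw [Fintype.card_piFinset]; push_cast; rfl
      have hsplit : ∏ m : Fin d,
          ((if m = i then Finset.Icc ⌊((k : ℝ) * s - 5 * w) / ℓ⌋ ⌊((k : ℝ) * s + 5 * w) / ℓ⌋
            else Finset.Icc zl zh).card : ℝ)
          = ((Finset.Icc ⌊((k : ℝ) * s - 5 * w) / ℓ⌋ ⌊((k : ℝ) * s + 5 * w) / ℓ⌋).card : ℝ)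
            * ((Finset.Icc zl zh).card : ℝ) ^ (d - 1) := by
        rw [← Finset.mul_prod_erase Finset.univ _ (Finset.mem_univ i)]
        simp only [if_pos rfl]
        congr 1
        rw [Finset.prod_congr rfl (fun m hm => by
          rw [if_neg (Finset.ne_of_mem_erase hm)]), Finset.prod_const]
        congr 1
        rw [Finset.card_erase_of_mem (Finset.mem_univ i), Finset.card_univ, Fintype.card_fin]
      have hAcard : ((Finset.Icc ⌊((k : ℝ) * s - 5 * w) / ℓ⌋
          ⌊((k : ℝ) * s + 5 * w) / ℓ⌋).card : ℝ) ≤ 10 * d + 2 := by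
        apply card_Icc_le (by positivity)
        have h1 : ((⌊((k : ℝ) * s + 5 * w) / ℓ⌋ : ℤ) : ℝ) ≤ ((k : ℝ) * s + 5 * w) / ℓ :=
          Int.floor_le _
        have h2 : ((k : ℝ) * s - 5 * w) / ℓ - 1 ≤ ((⌊((k : ℝ) * s - 5 * w) / ℓ⌋ : ℤ) : ℝ) := by
          have := Int.lt_floor_add_one (((k : ℝ) * s - 5 * w) / ℓ); linarith
        have h3 : ((k : ℝ) * s + 5 * w) / ℓ - (((k : ℝ) * s - 5 * w) / ℓ) = 10 * w / ℓ := by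
          field_simp; ring
        have h4 : 10 * w / ℓ = 10 * d := by rw [hℓdef]; field_simp
        linarith
      rw [hcardpi, hsplit]
      apply mul_le_mul hAcard (pow_le_pow_left₀ (Nat.cast_nonneg _) hG _)
        (pow_nonneg (Nat.cast_nonneg _) _) (by positivity)
    have hKcard : ((Finset.Icc (-K) K).card : ℝ) ≤ 13 * R / s := by
      apply card_Icc_le (by positivity)
      have h1 : ((K : ℤ) : ℝ) ≤ (R + 5 * w) / s := Int.floor_le _
      have h2 : (1 : ℝ) ≤ R / s := by rw [le_div_iff₀ hs0]; linarith
      have h3 : (R + 5 * w) / s ≤ 6 * R / s := by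
        gcongr
        nlinarith
      have e1 : 6 * R / s = 6 * (R / s) := by ring
      have e2 : 13 * R / s = 13 * (R / s) := by ring
      rw [e1] at h3
      rw [e2]
      push_cast
      linarith
    calc (F.card : ℝ) ≤ ∑ i : Fin d, ∑ k ∈ Finset.Icc (-K) K, ((Ii i k).card : ℝ) := hcard1
      _ ≤ ∑ i : Fin d, ∑ _k ∈ Finset.Icc (-K) K,
            ((10 * d + 2) * (3 * R * d / w) ^ (d - 1)) := by
          apply Finset.sum_le_sum
          intro i _
          exact Finset.sum_le_sum fun k _ => hA i k
      _ = d * (((Finset.Icc (-K) K).card : ℝ) * ((10 * d + 2) * (3 * R * d / w) ^ (d - 1))) := by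
          rw [Finset.sum_const, Finset.sum_const, Finset.card_univ, Fintype.card_fin]
          push_cast
          ring
      _ ≤ d * ((13 * R / s) * ((10 * d + 2) * (3 * R * d / w) ^ (d - 1))) := by
          apply mul_le_mul_of_nonneg_left _ hd0.le
          apply mul_le_mul_of_nonneg_right hKcard (by positivity)
      _ = 13 * R / s * ((10 * d + 2) * (3 * R * d / w) ^ (d - 1)) * d := by ring

/-! ### Function space topology lemmas -/

variable {Y : Type*} [TopologicalSpace Y]

lemma cm_mem_nhds (f : C(Y, ℝ)) {K : Set Y} (hK : IsCompact K) {ε : ℝ} (hε : 0 < ε) :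
    {g : C(Y, ℝ) | ∀ x ∈ K, |g x - f x| < ε} ∈ 𝓝 f := by
  rw [UniformSpace.mem_nhds_iff]
  refine ⟨{fg | ∀ x ∈ K, (fg.1 x, fg.2 x) ∈ {q : ℝ × ℝ | dist q.1 q.2 < ε}}, ?_, ?_⟩
  · apply ContinuousMap.hasBasis_compactConvergenceUniformity.mem_of_mem (i := (K, _))
    exact ⟨hK, Metric.dist_mem_uniformity hε⟩
  · intro g hg
    intro x hx
    have := hg x hx
    simpa [Real.dist_eq, abs_sub_comm] using this

lemma cm_nhds_exists (f : C(Y, ℝ)) {W : Set C(Y, ℝ)} (hW : W ∈ 𝓝 f) :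
    ∃ K : Set Y, IsCompact K ∧ ∃ ε : ℝ, 0 < ε ∧
      {g : C(Y, ℝ) | ∀ x ∈ K, |g x - f x| < ε} ⊆ W := by
  rw [UniformSpace.mem_nhds_iff] at hW
  obtain ⟨V, hV, hVW⟩ := hW
  rw [ContinuousMap.hasBasis_compactConvergenceUniformity.mem_iff] at hV
  obtain ⟨⟨K, U⟩, ⟨hK, hU⟩, hsub⟩ := hV
  obtain ⟨ε, hε, hball⟩ := Metric.mem_uniformity_dist.1 hU
  refine ⟨K, hK, ε, hε, ?_⟩
  intro g hg
  apply hVW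
  apply hsub
  intro x hx
  exact hball (by simpa [Real.dist_eq, abs_sub_comm] using hg x hx)

end BP
end

set_option maxHeartbeats 4000000 in
theorem stmt0
    (d : ℕ) (hd : 0 < d) (Ω : Set (EuclideanSpace ℝ (Fin d)))
    (hΩ : LocallyCompactSpace Ω)
    (φ ψ : ℝ → ℝ) (hφ : IsGauge φ) (hψ : IsGauge ψ)
    (hψd : ∀ ε : ℝ, 0 < ε → ∃ᶠ r in 𝓝[>] (0:ℝ), ψ r / r ^ (d - 1) < ε) :
    ∀ᶠ f : C(↥Ω, ℝ) in residual C(↥Ω, ℝ),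
      lowerBoxMeasure ψ
        {x : EuclideanSpace ℝ (Fin d) | ∃ hx : x ∈ Ω, 0 < lipGauge φ (⇑f) ⟨x, hx⟩} = 0 := by
  classical
  haveI := hΩ
  haveI : SigmaCompactSpace ↥Ω := sigmaCompactSpace_of_locallyCompact_secondCountable
  obtain ⟨hφmono, hφcont, hφ0, hφpos⟩ := hφ
  obtain ⟨hψmono, hψcont, hψ0, hψpos⟩ := hψ
  -- the scale sequence
  set sc : ℕ → ℝ := fun p => (1/2 : ℝ) ^ p with hsc
  have hsc_pos : ∀ p, 0 < sc p := fun p => by positivity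
  have hsc_le1 : ∀ p, sc p ≤ 1 := fun p => pow_le_one₀ (by norm_num) (by norm_num)
  have hsc_anti : ∀ p q : ℕ, p ≤ q → sc q ≤ sc p :=
    fun p q h => pow_le_pow_of_le_one (by norm_num) (by norm_num) h
  have hwex : ∀ p : ℕ, ∃ u : ℝ, 0 < u ∧ u ≤ sc p / 16 ∧ ψ u < u ^ (d-1) * (1/32 : ℝ)^p := by
    intro p
    have h1 := hψd ((1/32 : ℝ)^p) (by positivity)
    have h2 : Set.Ioo (0:ℝ) (sc p / 16) ∈ 𝓝[>] (0:ℝ) :=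
      Ioo_mem_nhdsGT_of_mem ⟨le_refl 0, by positivity⟩
    obtain ⟨r, hr1, hr2⟩ := (h1.and_eventually (eventually_of_mem h2 (fun r hr => hr))).exists
    refine ⟨r, hr2.1, hr2.2.le, ?_⟩
    have := (div_lt_iff₀ (pow_pos hr2.1 (d-1))).1 hr1
    linarith [this]
  choose w hw_pos hw_le hw_psi using hwex
  have h8w : ∀ p, 8 * w p ≤ sc p := fun p => by
    have := hw_le p; have := hsc_pos p; linarith
  have hw16 : ∀ p, w p ≤ 1/16 := fun p => by
    have h1 := hw_le p; have h2 := hsc_le1 p; linarith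
  have hws : ∀ p, w p ≤ sc p := fun p => by
    have := hw_le p; have := hsc_pos p; linarith
  have hwle2 : ∀ p, w p ≤ sc p / 16 := hw_le
  -- compact exhaustion and absorbing compacts
  set CE : CompactExhaustion ↥Ω := CompactExhaustion.choice ↥Ω with hCE
  have hLk : ∀ k : ℕ, ∃ L : Set ↥Ω, IsCompact L ∧ ∃ ρ : ℝ, 0 < ρ ∧
      ∀ x ∈ CE k, ∀ y : ↥Ω, dist y x ≤ ρ → y ∈ L := by
    intro k
    obtain ⟨L', hL', hsub⟩ := exists_compact_superset (CE.isCompact k)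
    obtain ⟨δ, hδ, hth⟩ := (CE.isCompact k).exists_thickening_subset_open isOpen_interior hsub
    refine ⟨L', hL', δ/2, by linarith, ?_⟩
    intro x hx y hy
    have hmem : y ∈ Metric.thickening δ (CE k) :=
      Metric.mem_thickening_iff.2 ⟨x, hx, lt_of_le_of_lt hy (by linarith)⟩
    exact interior_subset (hth hmem)
  choose L hLcomp ρ hρpos hρ using hLk
  have hRk : ∀ k : ℕ, ∃ R : ℝ, 1 ≤ R ∧
      (Subtype.val '' (CE k : Set ↥Ω)) ⊆ Metric.closedBall (0 : BP.Euc d) R := by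
    intro k
    have hcomp : IsCompact (Subtype.val '' (CE k : Set ↥Ω)) :=
      (CE.isCompact k).image continuous_subtype_val
    obtain ⟨r, hr⟩ := (Metric.isBounded_iff_subset_closedBall (0 : BP.Euc d)).1 hcomp.isBounded
    exact ⟨max r 1, le_max_right _ _,
      hr.trans (Metric.closedBall_subset_closedBall (le_max_left _ _))⟩
  choose R hR1 hRb using hRk
  -- the open dense sets
  set U : ℕ → ℕ → Set C(↥Ω, ℝ) := fun n k =>
    {f' | ∃ p : ℕ, n + 1 ≤ p ∧ w p ≤ ρ k ∧ ∃ g : C(↥Ω, ℝ),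
      (∀ x y : ↥Ω, (x : BP.Euc d) ∉ BP.BadSet (sc p) (w p) → dist y x ≤ w p → g y = g x) ∧
      ∀ x ∈ L k, |f' x - g x| < φ (w p) / ((n : ℝ) + 1)} with hU
  have hUopen : ∀ n k, IsOpen (U n k) := by
    intro n k
    rw [isOpen_iff_mem_nhds]
    intro f hf
    obtain ⟨p, hp1, hp2, g, hgflat, hgclose⟩ := hf
    set η := φ (w p) / ((n : ℝ) + 1) with hη
    have hηpos : 0 < η := div_pos (hφpos _ (hw_pos p)) (by positivity)
    rcases (L k).eq_empty_or_nonempty with hL | hL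
    · refine Filter.mem_of_superset Filter.univ_mem ?_
      intro f' _
      exact ⟨p, hp1, hp2, g, hgflat, by rw [hL]; intro x hx; exact absurd hx (notMem_empty x)⟩
    · obtain ⟨x₀, hx₀, hmax⟩ := (hLcomp k).exists_isMaxOn hL
        ((f.continuous.sub g.continuous).abs.continuousOn)
      set m := |f x₀ - g x₀| with hm
      have hmlt : m < η := hgclose x₀ hx₀
      refine Filter.mem_of_superset (BP.cm_mem_nhds f (hLcomp k) (by linarith : 0 < η - m)) ?_
      intro f' hf'
      refine ⟨p, hp1, hp2, g, hgflat, ?_⟩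
      intro x hx
      have h1 : |f' x - f x| < η - m := hf' x hx
      have h2 : |f x - g x| ≤ m := hmax hx
      calc |f' x - g x| ≤ |f' x - f x| + |f x - g x| := abs_sub_le _ _ _
        _ < (η - m) + m := by apply add_lt_add_of_lt_of_le h1 h2
        _ = η := by ring
  have hUdense : ∀ n k, Dense (U n k) := by
    intro n k
    rw [dense_iff_inter_open]
    rintro W hWopen ⟨f, hfW⟩
    obtain ⟨Kc, hKc, ε, hε, hsubW⟩ := BP.cm_nhds_exists f (hWopen.mem_nhds hfW)
    -- compact set in ambient space
    set M : Set ↥Ω := Kc ∪ L k with hM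
    have hMcomp : IsCompact M := hKc.union (hLcomp k)
    set M' : Set (BP.Euc d) := Subtype.val '' M with hM'
    have hM'comp : IsCompact M' := hMcomp.image continuous_subtype_val
    have hM'closed : IsClosed M' := hM'comp.isClosed
    have hM'sub : M' ⊆ Ω := by rintro z ⟨y, _, rfl⟩; exact y.2
    -- Tietze extension of f restricted to M'
    set fM : C(M', ℝ) := ⟨fun z => f ⟨z.1, hM'sub z.2⟩,
      f.continuous.comp (Continuous.subtype_mk continuous_subtype_val _)⟩ with hfM
    obtain ⟨F, hF⟩ := fM.exists_restrict_eq hM'closed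
    have hFeq : ∀ y : ↥Ω, (y : BP.Euc d) ∈ M' → F y = f y := by
      intro y hy
      have := congrFun (congrArg DFunLike.coe hF) ⟨(y : BP.Euc d), hy⟩
      simpa [hfM, ContinuousMap.restrict] using this
    -- uniform continuity on a compact thickening
    set T : Set (BP.Euc d) := Metric.cthickening 1 M' with hT
    have hTcomp : IsCompact T := hM'comp.cthickening
    have hunif : UniformContinuousOn F T :=
      hTcomp.uniformContinuousOn_of_continuous F.continuous.continuousOn
    obtain ⟨δ, hδ, hmod⟩ := (Metric.uniformContinuousOn_iff).1 hunif ε hε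
    -- choose the scale p
    have hdpos : (0 : ℝ) < (d : ℝ) + 1 := by positivity
    obtain ⟨p₀, hp₀⟩ := exists_pow_lt_of_lt_one
      (show 0 < min (ρ k) (min δ 1) / ((d : ℝ) + 1) by
        apply div_pos _ hdpos
        exact lt_min (hρpos k) (lt_min hδ one_pos)) (by norm_num : (1/2 : ℝ) < 1)
    set p := p₀ + (n + 1) with hp
    have hscp : sc p ≤ (1/2:ℝ) ^ p₀ := hsc_anti p₀ p (by omega)
    have hscp2 : sc p < min (ρ k) (min δ 1) / ((d : ℝ) + 1) := lt_of_le_of_lt hscp hp₀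
    have hwρ : w p ≤ ρ k := by
      have h1 : sc p ≤ min (ρ k) (min δ 1) := by
        calc sc p ≤ sc p * ((d:ℝ)+1) := le_mul_of_one_le_right (hsc_pos p).le (by norm_num)
          _ ≤ min (ρ k) (min δ 1) := by
              rw [← le_div_iff₀ hdpos]
              exact hscp2.le
      calc w p ≤ sc p := hws p
        _ ≤ min (ρ k) (min δ 1) := h1
        _ ≤ ρ k := min_le_left _ _
    have hscd : sc p * d < min δ 1 := by
      calc sc p * d < (min (ρ k) (min δ 1) / ((d : ℝ) + 1)) * d := by
            apply mul_lt_mul_of_pos_right hscp2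
            exact_mod_cast hd
        _ ≤ min (ρ k) (min δ 1) * 1 := by
            rw [div_mul_eq_mul_div, mul_one, div_le_iff₀ hdpos]
            apply mul_le_mul_of_nonneg_left _ (le_of_lt (lt_min (hρpos k) (lt_min hδ one_pos)))
            push_cast; linarith
        _ ≤ min δ 1 := by rw [mul_one]; exact min_le_right _ _
    -- the flat approximation
    set h : C(↥Ω, ℝ) := ⟨fun z => F (BP.Theta (sc p) (w p) (z : BP.Euc d)),
      F.continuous.comp ((BP.continuous_Theta (hw_pos p) (h8w p)).comp continuous_subtype_val)⟩
      with hh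
    have hTmem : ∀ z : ↥Ω, (z : BP.Euc d) ∈ M' → BP.Theta (sc p) (w p) (z : BP.Euc d) ∈ T := by
      intro z hz
      apply Metric.mem_cthickening_of_dist_le _ _ 1 _ hz
      calc dist (BP.Theta (sc p) (w p) (z : BP.Euc d)) (z : BP.Euc d) ≤ sc p * d :=
            BP.dist_Theta_le (hw_pos p) (h8w p) _
        _ ≤ min δ 1 := hscd.le
        _ ≤ 1 := min_le_right _ _
    have hclose : ∀ z : ↥Ω, (z : BP.Euc d) ∈ M' → |h z - f z| < ε := by
      intro z hz
      rw [hh]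
      simp only [ContinuousMap.coe_mk]
      rw [← hFeq z hz, ← Real.dist_eq]
      apply hmod _ (hTmem z hz) _ (Metric.self_subset_cthickening _ hz)
      calc dist (BP.Theta (sc p) (w p) (z : BP.Euc d)) (z : BP.Euc d) ≤ sc p * d :=
            BP.dist_Theta_le (hw_pos p) (h8w p) _
        _ < min δ 1 := hscd
        _ ≤ δ := min_le_left _ _
    have hhU : h ∈ U n k := by
      refine ⟨p, by omega, hwρ, h, ?_, ?_⟩
      · intro x y hx hxy
        rw [hh]
        simp only [ContinuousMap.coe_mk]
        congr 1
        apply BP.Theta_const (hw_pos p) (h8w p) hx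
        rwa [Subtype.dist_eq y x] at hxy
      · intro x _
        simp only [sub_self, abs_zero]
        apply div_pos (hφpos _ (hw_pos p)) (by positivity)
    have hhW : h ∈ W := by
      apply hsubW
      intro x hx
      exact hclose x (Set.mem_image_of_mem _ (Set.mem_union_left _ hx))
    exact ⟨h, hhW, hhU⟩
  -- the residual set
  have hAmem : (⋂ n, ⋂ k, U n k) ∈ residual C(↥Ω, ℝ) :=
    countable_iInter_mem.2 fun n => countable_iInter_mem.2 fun k =>
      residual_of_dense_open (hUopen n k) (hUdense n k)
  refine Filter.mem_of_superset hAmem ?_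
  intro f hf
  simp only [Set.mem_iInter] at hf
  -- choose witnesses
  have hf' : ∀ n k : ℕ, ∃ p : ℕ, n + 1 ≤ p ∧ w p ≤ ρ k ∧ ∃ g : C(↥Ω, ℝ),
      (∀ x y : ↥Ω, (x : BP.Euc d) ∉ BP.BadSet (sc p) (w p) → dist y x ≤ w p → g y = g x) ∧
      ∀ x ∈ L k, |f x - g x| < φ (w p) / ((n : ℝ) + 1) := fun n k => hf n k
  choose P hP1 hP2 g hgflat hgclose using hf'
  -- the ratio bound at good points
  have hratio : ∀ (n k : ℕ) (x : ↥Ω), x ∈ CE k →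
      (x : BP.Euc d) ∉ BP.BadSet (sc (P n k)) (w (P n k)) →
      EMetric.diam (f '' Metric.closedBall x (w (P n k))) / ENNReal.ofReal (φ (w (P n k)))
        ≤ ENNReal.ofReal (4 / ((n : ℝ) + 1)) := by
    intro n k x hxk hxgood
    set p := P n k with hpdef
    set η := φ (w p) / ((n : ℝ) + 1) with hη
    have hηpos : 0 < η := div_pos (hφpos _ (hw_pos p)) (by positivity)
    have hkey : ∀ y ∈ Metric.closedBall x (w p), |f y - f x| < 2 * η := by
      intro y hy
      have hyd : dist y x ≤ w p := Metric.mem_closedBall.1 hy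
      have hyL : y ∈ L k := hρ k x hxk y (hyd.trans (hP2 n k))
      have hxL : x ∈ L k := hρ k x hxk x (by simp [(hρpos k).le])
      have hgyx : g n k y = g n k x := hgflat n k x y hxgood hyd
      have h1 : |f y - g n k y| < η := hgclose n k y hyL
      have h2 : |f x - g n k x| < η := hgclose n k x hxL
      calc |f y - f x| = |(f y - g n k y) + (g n k x - f x)| := by rw [hgyx]; ring_nf
        _ ≤ |f y - g n k y| + |g n k x - f x| := abs_add_le _ _
        _ < η + η := by
            apply add_lt_add h1 _
            rwa [abs_sub_comm]
        _ = 2 * η := by ring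
    have hdiam : EMetric.diam (f '' Metric.closedBall x (w p)) ≤ ENNReal.ofReal (4 * η) := by
      apply EMetric.diam_le
      rintro a ⟨y1, hy1, rfl⟩ b ⟨y2, hy2, rfl⟩
      rw [edist_dist, Real.dist_eq]
      apply ENNReal.ofReal_le_ofReal
      have k1 := hkey y1 hy1
      have k2 := hkey y2 hy2
      calc |f y1 - f y2| = |(f y1 - f x) - (f y2 - f x)| := by ring_nf
        _ ≤ |f y1 - f x| + |f y2 - f x| := abs_sub _ _
        _ ≤ 4 * η := by linarith
    apply ENNReal.div_le_of_le_mul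
    refine hdiam.trans (le_of_eq ?_)
    rw [← ENNReal.ofReal_mul (by positivity)]
    congr 1
    rw [hη]
    ring
  -- the exceptional sets
  set Tset : ℕ → ℕ → Set (BP.Euc d) := fun k N =>
    Metric.closedBall (0 : BP.Euc d) (R k) ∩
      ⋂ n : ℕ, BP.BadSet (sc (P (N + n) k)) (w (P (N + n) k)) with hTset
  set Ef : Set (BP.Euc d) :=
    {x : EuclideanSpace ℝ (Fin d) | ∃ hx : x ∈ Ω, 0 < lipGauge φ (⇑f) ⟨x, hx⟩} with hEf
  -- Claim A: Ef is covered by the Tset's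
  have hclaimA : Ef ⊆ ⋃ k, ⋃ N, Tset k N := by
    rintro x ⟨hx, hlip⟩
    obtain ⟨k, hk⟩ := CE.exists_mem ⟨x, hx⟩
    by_cases hcase : ∃ N : ℕ, ∀ n : ℕ,
        (x : BP.Euc d) ∈ BP.BadSet (sc (P (N + n) k)) (w (P (N + n) k))
    · obtain ⟨N, hN⟩ := hcase
      refine Set.mem_iUnion.2 ⟨k, Set.mem_iUnion.2 ⟨N, ?_, Set.mem_iInter.2 hN⟩⟩
      exact hRb k (Set.mem_image_of_mem _ hk)
    · exfalso
      push_neg at hcase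
      have hzero : lipGauge φ (⇑f) ⟨x, hx⟩ = 0 := by
        apply le_antisymm _ zero_le
        apply ENNReal.le_of_forall_pos_le_add
        intro ε hε _
        rw [zero_add]
        have hεR : (0 : ℝ) < (ε : ℝ) := hε
        obtain ⟨m, hm⟩ := exists_nat_gt (4 / (ε : ℝ))
        have hofreal : ENNReal.ofReal (4 / ((m : ℝ) + 1)) ≤ (ε : ℝ≥0∞) := by
          rw [← ENNReal.ofReal_coe_nnreal]
          apply ENNReal.ofReal_le_ofReal
          rw [div_le_iff₀ (by positivity)]
          rw [div_lt_iff₀ hεR] at hm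
          nlinarith [hεR.le]
        refine le_trans (Filter.liminf_le_of_frequently_le' ?_) hofreal
        rw [Filter.frequently_iff]
        intro S hS
        obtain ⟨c, hc, hsub⟩ := mem_nhdsGT_iff_exists_Ioo_subset.1 hS
        have hc0 : (0 : ℝ) < c := hc
        obtain ⟨N₀, hN₀⟩ := exists_pow_lt_of_lt_one hc0 (by norm_num : (1/2 : ℝ) < 1)
        set N := max m N₀ with hN
        obtain ⟨n, hn⟩ := hcase N
        set p := P (N + n) k with hpdef
        have hpge : N₀ ≤ p := by
          have h1 := hP1 (N + n) k
          have h2 : N₀ ≤ N := le_max_right _ _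
          omega
        have hwpc : w p < c := by
          calc w p ≤ sc p := hws p
            _ ≤ (1/2:ℝ) ^ N₀ := hsc_anti N₀ p hpge
            _ < c := hN₀
        refine ⟨w p, hsub ⟨hw_pos p, hwpc⟩, ?_⟩
        refine le_trans (hratio (N + n) k ⟨x, hx⟩ hk hn) ?_
        apply ENNReal.ofReal_le_ofReal
        apply div_le_div_of_nonneg_left (by norm_num) (by positivity)
        have : (m : ℝ) ≤ ((N : ℕ) : ℝ) + n := by
          have h1 : m ≤ N := le_max_left _ _
          have : (m : ℝ) ≤ (N : ℝ) := by exact_mod_cast h1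
          have h2 : (0 : ℝ) ≤ n := Nat.cast_nonneg n
          push_cast
          linarith
        push_cast
        linarith
      rw [hzero] at hlip
      exact lt_irrefl _ hlip
  -- Claim B: each Tset has nu0 zero
  have hclaimB : ∀ k N : ℕ, nu0 ψ (Tset k N) = 0 := by
    intro k N
    have hR0 : (0 : ℝ) < R k := lt_of_lt_of_le one_pos (hR1 k)
    have hd0 : (0 : ℝ) < (d : ℝ) := by exact_mod_cast hd
    set C : ℝ := 13 * R k * ((10 * d + 2) * (3 * R k * d) ^ (d - 1)) * d with hC
    have hCpos : 0 < C := by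
      apply mul_pos (mul_pos (by linarith) _) hd0
      apply mul_pos (by positivity)
      exact pow_pos (by positivity) _
    apply le_antisymm _ zero_le
    apply ENNReal.le_of_forall_pos_le_add
    intro ε hε _
    rw [zero_add]
    have hεR : (0 : ℝ) < (ε : ℝ) := hε
    apply Filter.liminf_le_of_frequently_le'
    rw [Filter.frequently_iff]
    intro S hS
    obtain ⟨c, hc, hsub⟩ := mem_nhdsGT_iff_exists_Ioo_subset.1 hS
    have hc0 : (0 : ℝ) < c := hc
    obtain ⟨n₁, hn₁⟩ := exists_pow_lt_of_lt_one hc0 (by norm_num : (1/2 : ℝ) < 1)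
    obtain ⟨n₂, hn₂⟩ := exists_pow_lt_of_lt_one (div_pos hεR hCpos)
      (by norm_num : (1/16 : ℝ) < 1)
    set n := max n₁ n₂ with hn
    set p := P (N + n) k with hpdef
    have hpge : n ≤ p := by
      have h1 := hP1 (N + n) k
      omega
    have hwpc : w p < c := by
      calc w p ≤ sc p := hws p
        _ ≤ (1/2:ℝ) ^ n₁ := hsc_anti n₁ p (le_trans (le_max_left _ _) hpge)
        _ < c := hn₁
    refine ⟨w p, hsub ⟨hw_pos p, hwpc⟩, ?_⟩
    -- the covering estimate
    obtain ⟨Nc, hN1, hN2⟩ := BP.count_bad hd (hR1 k) (hw_pos p) (hw16 p) (hws p) (hsc_le1 p)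
    have hTsub : Tset k N ⊆ Metric.closedBall (0 : BP.Euc d) (R k) ∩
        BP.BadSet (sc p) (w p) := by
      intro z hz
      exact ⟨hz.1, Set.mem_iInter.1 hz.2 n⟩
    have h1 : coverNum (w p) (Tset k N) ≤ (Nc : ℝ≥0∞) :=
      (BP.coverNum_mono_set hTsub).trans hN1
    have hψnn : 0 ≤ ψ (w p) := (hψpos _ (hw_pos p)).le
    have hreal : (Nc : ℝ) * ψ (w p) ≤ C * (1/16 : ℝ) ^ p := by
      have hb0 : (0 : ℝ) ≤ 13 * R k / sc p * ((10 * d + 2) * (3 * R k * d / w p) ^ (d - 1)) * d := by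
        apply mul_nonneg (mul_nonneg _ _) hd0.le
        · apply div_nonneg (by linarith) (hsc_pos p).le
        · apply mul_nonneg (by positivity)
          apply pow_nonneg
          apply div_nonneg (by positivity) (hw_pos p).le
      have e1 : (Nc : ℝ) * ψ (w p)
          ≤ (13 * R k / sc p * ((10 * d + 2) * (3 * R k * d / w p) ^ (d - 1)) * d)
            * (w p ^ (d-1) * (1/32 : ℝ)^p) :=
        mul_le_mul hN2 (hw_psi p).le hψnn hb0
      have epow : (3 * R k * (d:ℝ) / w p) ^ (d - 1) * (w p) ^ (d - 1)
          = (3 * R k * (d:ℝ)) ^ (d - 1) := by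
        rw [div_pow, div_mul_cancel₀]
        exact pow_ne_zero _ (ne_of_gt (hw_pos p))
      have e2 : (13 * R k / sc p * ((10 * d + 2) * (3 * R k * d / w p) ^ (d - 1)) * d)
            * (w p ^ (d-1) * (1/32 : ℝ)^p)
          = C * ((1 / sc p) * (1/32 : ℝ)^p) := by
        calc (13 * R k / sc p * ((10 * d + 2) * (3 * R k * d / w p) ^ (d - 1)) * d)
              * (w p ^ (d-1) * (1/32 : ℝ)^p)
            = (13 * R k * (10 * d + 2) * d)
              * ((3 * R k * (d:ℝ) / w p) ^ (d - 1) * (w p) ^ (d - 1))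
              * ((1 / sc p) * (1/32 : ℝ)^p) := by ring
          _ = C * ((1 / sc p) * (1/32 : ℝ)^p) := by rw [epow, hC]; ring
      have e3 : (1 / sc p) * (1/32 : ℝ)^p = (1/16 : ℝ)^p := by
        rw [hsc]
        simp only []
        rw [one_div, ← inv_pow]
        have : ((1/2 : ℝ))⁻¹ = 2 := by norm_num
        rw [this, ← mul_pow]
        norm_num
      rw [e2, e3] at e1
      exact e1
    have hfinal : C * (1/16 : ℝ) ^ p ≤ (ε : ℝ) := by
      have h1 : ((1:ℝ)/16) ^ p ≤ (1/16 : ℝ) ^ n₂ :=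
        pow_le_pow_of_le_one (by norm_num) (by norm_num)
          (le_trans (le_max_right _ _) hpge)
      have h2 : C * (1/16 : ℝ) ^ p ≤ C * (1/16 : ℝ) ^ n₂ :=
        mul_le_mul_of_nonneg_left h1 hCpos.le
      have h3 : C * (1/16 : ℝ) ^ n₂ < C * ((ε : ℝ) / C) :=
        mul_lt_mul_of_pos_left hn₂ hCpos
      have h4 : C * ((ε : ℝ) / C) = (ε : ℝ) := by field_simp
      linarith
    calc coverNum (w p) (Tset k N) * ENNReal.ofReal (ψ (w p))
        ≤ (Nc : ℝ≥0∞) * ENNReal.ofReal (ψ (w p)) :=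
          mul_le_mul_left h1 _
      _ = ENNReal.ofReal ((Nc : ℝ) * ψ (w p)) := by
          rw [← ENNReal.ofReal_natCast Nc, ← ENNReal.ofReal_mul (Nat.cast_nonneg _)]
      _ ≤ ENNReal.ofReal ((ε : ℝ)) := ENNReal.ofReal_le_ofReal (hreal.trans hfinal)
      _ = (ε : ℝ≥0∞) := ENNReal.ofReal_coe_nnreal
  -- conclusion
  show lowerBoxMeasure ψ Ef = 0
  apply le_antisymm _ zero_le
  set Gs : ℕ → Set (BP.Euc d) := fun m => Tset (Nat.unpair m).1 (Nat.unpair m).2 with hGs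
  have hcov : Ef ⊆ ⋃ m, Gs m := by
    intro x hx
    obtain ⟨k, hk⟩ := Set.mem_iUnion.1 (hclaimA hx)
    obtain ⟨N, hN⟩ := Set.mem_iUnion.1 hk
    exact Set.mem_iUnion.2 ⟨Nat.pair k N, by simpa [hGs, Nat.unpair_pair] using hN⟩
  calc lowerBoxMeasure ψ Ef ≤ ∑' m, nu0 ψ (Gs m) := iInf₂_le Gs hcov
    _ = 0 := by
        rw [tsum_congr (fun m => hclaimB (Nat.unpair m).1 (Nat.unpair m).2), tsum_zero]
end

section
/- If E ⊆ ℝ^d is microscopic and F ⊆ ℝ^m is microscopic, then the cross product E ⋈ F = (E × ℝ^m) ∪ (ℝ^d × F) ⊆ ℝ^{d+m} is microscopic. -/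
open Filter Set Topology MeasureTheory
open scoped ENNReal NNReal

def decJ (i : ℕ) : ℕ := (i + 1).factorization 2
def decN (i : ℕ) : ℕ := ((i + 1) / 2 ^ decJ i) / 2

lemma enc_pos (j n : ℕ) : 1 ≤ 2 ^ j * (2 * n + 1) :=
  Nat.one_le_iff_ne_zero.mpr (by positivity)

lemma key_decode (i : ℕ) : i + 1 = 2 ^ decJ i * (2 * decN i + 1) := by
  have h0 : i + 1 ≠ 0 := by omega
  have h1 : 2 ^ decJ i * ((i + 1) / 2 ^ decJ i) = i + 1 :=
    Nat.ordProj_mul_ordCompl_eq_self (i + 1) 2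
  have h2 : ¬ 2 ∣ ((i + 1) / 2 ^ decJ i) :=
    Nat.not_dvd_ordCompl Nat.prime_two h0
  set o := (i + 1) / 2 ^ decJ i with ho
  have h3 : o % 2 = 1 := by omega
  have h4 : 2 * (o / 2) + 1 = o := by omega
  show i + 1 = 2 ^ decJ i * (2 * (o / 2) + 1)
  rw [h4]; exact h1.symm

lemma keyJ (j n : ℕ) : decJ (2 ^ j * (2 * n + 1) - 1) = j := by
  have h1 : (2 ^ j * (2 * n + 1) - 1) + 1 = 2 ^ j * (2 * n + 1) := by
    have := enc_pos j n; omega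
  unfold decJ
  rw [h1, Nat.factorization_mul (by positivity) (by omega),
    Nat.Prime.factorization_pow Nat.prime_two]
  have hodd : (2 * n + 1).factorization 2 = 0 :=
    Nat.factorization_eq_zero_of_not_dvd (by omega)
  simp [hodd]

lemma keyN (j n : ℕ) : decN (2 ^ j * (2 * n + 1) - 1) = n := by
  have h1 : (2 ^ j * (2 * n + 1) - 1) + 1 = 2 ^ j * (2 * n + 1) := by
    have := enc_pos j n; omega
  unfold decN
  rw [keyJ, h1, Nat.mul_div_cancel_left _ (pow_pos (by norm_num) j)]
  omega

lemma volume_box {k : ℕ} (a b : Fin k → ℝ) :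
    volume {x : EuclideanSpace ℝ (Fin k) | ∀ i, x i ∈ Set.Icc (a i) (b i)} =
      ∏ i, ENNReal.ofReal (b i - a i) := by
  have hmp := EuclideanSpace.volume_preserving_symm_measurableEquiv_toLp (Fin k)
  have hset : {x : EuclideanSpace ℝ (Fin k) | ∀ i, x i ∈ Set.Icc (a i) (b i)} =
      (MeasurableEquiv.toLp 2 (Fin k → ℝ)).symm ⁻¹' (Set.univ.pi fun i => Set.Icc (a i) (b i)) := by
    ext x
    show _ ↔ ∀ i ∈ Set.univ, _
    simp only [Set.mem_univ, true_implies, Set.mem_setOf_eq]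
    exact Iff.rfl
  rw [hset, hmp.measure_preimage (MeasurableSet.univ_pi fun i => measurableSet_Icc).nullMeasurableSet,
    volume_pi_pi]
  simp [Real.volume_Icc]

lemma micro_of_small {k : ℕ} {X : Set (EuclideanSpace ℝ (Fin k))}
    (h : ∀ ε : ℝ, 0 < ε → ε < 1 → ∃ B : ℕ → Set (EuclideanSpace ℝ (Fin k)),
      (∀ n, IsBox (B n)) ∧ X ⊆ ⋃ n, B n ∧
      ∀ n, MeasureTheory.volume (B n) ≤ ENNReal.ofReal (ε ^ (n + 1))) :
    Microscopic X := by
  intro ε hε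
  obtain ⟨B, h1, h2, h3⟩ := h (min ε 2⁻¹) (by positivity)
    (lt_of_le_of_lt (min_le_right _ _) (by norm_num))
  exact ⟨B, h1, h2, fun n => (h3 n).trans (ENNReal.ofReal_le_ofReal
    (pow_le_pow_left₀ (by positivity) (min_le_left _ _) _))⟩

lemma micro_cyl_left {d : ℕ} (m : ℕ) {E : Set (EuclideanSpace ℝ (Fin d))}
    (hE : Microscopic E) :
    Microscopic {x : EuclideanSpace ℝ (Fin (d + m)) |
      WithLp.toLp 2 (fun i : Fin d => x (Fin.castAdd m i)) ∈ E} := by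
  apply micro_of_small
  intro ε hε hε1
  have hc1 : ∀ j : ℕ, (1:ℝ) ≤ (2 * (j:ℝ) + 2) ^ m := fun j =>
    one_le_pow₀ (by have := Nat.cast_nonneg (α := ℝ) j; linarith)
  have hηpos : ∀ j : ℕ, 0 < ε ^ (2 ^ (j + 1)) / (2 * (j:ℝ) + 2) ^ m := fun j => by
    have := Nat.cast_nonneg (α := ℝ) j; positivity
  choose BE hbox hcov hvol using fun j : ℕ =>
    hE (ε ^ (2 ^ (j + 1)) / (2 * (j:ℝ) + 2) ^ m) (hηpos j)
  choose aE bE hab using fun j n => hbox j n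
  refine ⟨fun i => {x : EuclideanSpace ℝ (Fin (d + m)) | ∀ t, x t ∈ Set.Icc
      (Fin.addCases (aE (decJ i) (decN i)) (fun _ => -((decJ i : ℝ)) - 1) t)
      (Fin.addCases (bE (decJ i) (decN i)) (fun _ => (decJ i : ℝ) + 1) t)},
    fun i => ⟨_, _, rfl⟩, ?_, ?_⟩
  · -- coverage
    intro x hx
    simp only [Set.mem_setOf_eq] at hx
    obtain ⟨j, hj⟩ : ∃ j : ℕ, ∀ r : Fin m, |x (Fin.natAdd d r)| ≤ (j:ℝ) + 1 := by
      refine ⟨Nat.ceil (∑ r : Fin m, |x (Fin.natAdd d r)|), fun r => ?_⟩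
      have h1 : |x (Fin.natAdd d r)| ≤ ∑ r : Fin m, |x (Fin.natAdd d r)| :=
        Finset.single_le_sum (f := fun r : Fin m => |x (Fin.natAdd d r)|)
          (fun _ _ => abs_nonneg _) (Finset.mem_univ r)
      have h2 := Nat.le_ceil (∑ r : Fin m, |x (Fin.natAdd d r)|)
      linarith
    obtain ⟨n, hn⟩ := Set.mem_iUnion.1 (hcov j hx)
    refine Set.mem_iUnion.2 ⟨2 ^ j * (2 * n + 1) - 1, ?_⟩
    simp only [Set.mem_setOf_eq, keyJ, keyN]
    intro t
    refine Fin.addCases (fun q => ?_) (fun r => ?_) t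
    · simp only [Fin.addCases_left]
      rw [hab j n] at hn
      exact hn q
    · simp only [Fin.addCases_right]
      have := abs_le.1 (hj r)
      constructor
      · linarith [this.1]
      · linarith [this.2]
  · -- volume
    intro i
    set j := decJ i with hj
    set n := decN i with hn
    rw [volume_box, Fin.prod_univ_add]
    have hL : (∏ q : Fin d, ENNReal.ofReal
        ((Fin.addCases (bE j n) (fun _ => (j:ℝ) + 1) (Fin.castAdd m q)) -
         (Fin.addCases (aE j n) (fun _ => -((j:ℝ)) - 1) (Fin.castAdd m q))))
        = volume (BE j n) := by
      rw [hab j n, volume_box]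
      apply Finset.prod_congr rfl
      intro q _
      simp [Fin.addCases_left]
    have hR : (∏ r : Fin m, ENNReal.ofReal
        ((Fin.addCases (bE j n) (fun _ => (j:ℝ) + 1) (Fin.natAdd d r)) -
         (Fin.addCases (aE j n) (fun _ => -((j:ℝ)) - 1) (Fin.natAdd d r))))
        = ENNReal.ofReal ((2 * (j:ℝ) + 2) ^ m) := by
      have hterm : ∀ r : Fin m,
          (Fin.addCases (bE j n) (fun _ => (j:ℝ) + 1) (Fin.natAdd d r)) -
            (Fin.addCases (aE j n) (fun _ => -((j:ℝ)) - 1) (Fin.natAdd d r)) = 2 * (j:ℝ) + 2 := by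
        intro r
        simp only [Fin.addCases_right]
        ring
      calc (∏ r : Fin m, ENNReal.ofReal
          ((Fin.addCases (bE j n) (fun _ => (j:ℝ) + 1) (Fin.natAdd d r)) -
           (Fin.addCases (aE j n) (fun _ => -((j:ℝ)) - 1) (Fin.natAdd d r))))
          = ∏ _r : Fin m, ENNReal.ofReal (2 * (j:ℝ) + 2) :=
            Finset.prod_congr rfl (fun r _ => by rw [hterm r])
        _ = (ENNReal.ofReal (2 * (j:ℝ) + 2)) ^ m := by
            rw [Finset.prod_const, Finset.card_univ, Fintype.card_fin]
        _ = ENNReal.ofReal ((2 * (j:ℝ) + 2) ^ m) :=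
            (ENNReal.ofReal_pow (by have := Nat.cast_nonneg (α := ℝ) j; linarith) m).symm
    rw [hL, hR]
    refine le_trans (mul_le_mul_left (hvol j n) _) ?_
    rw [← ENNReal.ofReal_mul (by positivity)]
    apply ENNReal.ofReal_le_ofReal
    -- real arithmetic
    set c := (2 * (j:ℝ) + 2) ^ m with hcdef
    have hc0 : (0:ℝ) < c := lt_of_lt_of_le one_pos (hc1 j)
    have e1 : (ε ^ (2 ^ (j + 1)) / c) * c = ε ^ (2 ^ (j + 1)) :=
      div_mul_cancel₀ _ hc0.ne'
    have hle : i + 1 ≤ 2 ^ (j + 1) * (n + 1) := by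
      have hk := key_decode i
      calc i + 1 = 2 ^ j * (2 * n + 1) := hk
        _ ≤ 2 ^ j * (2 * (n + 1)) := Nat.mul_le_mul_left _ (by omega)
        _ = 2 ^ (j + 1) * (n + 1) := by ring
    calc (ε ^ (2 ^ (j + 1)) / c) ^ (n + 1) * c
        = (ε ^ (2 ^ (j + 1)) / c) ^ n * ((ε ^ (2 ^ (j + 1)) / c) * c) := by ring
      _ = (ε ^ (2 ^ (j + 1)) / c) ^ n * ε ^ (2 ^ (j + 1)) := by rw [e1]
      _ ≤ (ε ^ (2 ^ (j + 1))) ^ n * ε ^ (2 ^ (j + 1)) := by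
          gcongr
          exact div_le_self (pow_nonneg hε.le _) (hc1 j)
      _ = ε ^ (2 ^ (j + 1) * (n + 1)) := by rw [← pow_succ, ← pow_mul]
      _ ≤ ε ^ (i + 1) := pow_le_pow_of_le_one hε.le hε1.le hle

lemma micro_cyl_right (d : ℕ) {m : ℕ} {F : Set (EuclideanSpace ℝ (Fin m))}
    (hF : Microscopic F) :
    Microscopic {x : EuclideanSpace ℝ (Fin (d + m)) |
      WithLp.toLp 2 (fun r : Fin m => x (Fin.natAdd d r)) ∈ F} := by
  apply micro_of_small
  intro ε hε hε1
  have hc1 : ∀ j : ℕ, (1:ℝ) ≤ (2 * (j:ℝ) + 2) ^ d := fun j =>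
    one_le_pow₀ (by have := Nat.cast_nonneg (α := ℝ) j; linarith)
  have hηpos : ∀ j : ℕ, 0 < ε ^ (2 ^ (j + 1)) / (2 * (j:ℝ) + 2) ^ d := fun j => by
    have := Nat.cast_nonneg (α := ℝ) j; positivity
  choose BF hbox hcov hvol using fun j : ℕ =>
    hF (ε ^ (2 ^ (j + 1)) / (2 * (j:ℝ) + 2) ^ d) (hηpos j)
  choose aF bF hab using fun j n => hbox j n
  refine ⟨fun i => {x : EuclideanSpace ℝ (Fin (d + m)) | ∀ t, x t ∈ Set.Icc
      (Fin.addCases (fun _ => -((decJ i : ℝ)) - 1) (aF (decJ i) (decN i)) t)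
      (Fin.addCases (fun _ => (decJ i : ℝ) + 1) (bF (decJ i) (decN i)) t)},
    fun i => ⟨_, _, rfl⟩, ?_, ?_⟩
  · intro x hx
    simp only [Set.mem_setOf_eq] at hx
    obtain ⟨j, hj⟩ : ∃ j : ℕ, ∀ q : Fin d, |x (Fin.castAdd m q)| ≤ (j:ℝ) + 1 := by
      refine ⟨Nat.ceil (∑ q : Fin d, |x (Fin.castAdd m q)|), fun q => ?_⟩
      have h1 : |x (Fin.castAdd m q)| ≤ ∑ q : Fin d, |x (Fin.castAdd m q)| :=
        Finset.single_le_sum (f := fun q : Fin d => |x (Fin.castAdd m q)|)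
          (fun _ _ => abs_nonneg _) (Finset.mem_univ q)
      have h2 := Nat.le_ceil (∑ q : Fin d, |x (Fin.castAdd m q)|)
      linarith
    obtain ⟨n, hn⟩ := Set.mem_iUnion.1 (hcov j hx)
    refine Set.mem_iUnion.2 ⟨2 ^ j * (2 * n + 1) - 1, ?_⟩
    simp only [Set.mem_setOf_eq, keyJ, keyN]
    intro t
    refine Fin.addCases (fun q => ?_) (fun r => ?_) t
    · simp only [Fin.addCases_left]
      have := abs_le.1 (hj q)
      constructor
      · linarith [this.1]
      · linarith [this.2]
    · simp only [Fin.addCases_right]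
      rw [hab j n] at hn
      exact hn r
  · intro i
    set j := decJ i with hj
    set n := decN i with hn
    rw [volume_box, Fin.prod_univ_add]
    have hL : (∏ q : Fin d, ENNReal.ofReal
        ((Fin.addCases (fun _ => (j:ℝ) + 1) (bF j n) (Fin.castAdd m q)) -
         (Fin.addCases (fun _ => -((j:ℝ)) - 1) (aF j n) (Fin.castAdd m q))))
        = ENNReal.ofReal ((2 * (j:ℝ) + 2) ^ d) := by
      have hterm : ∀ q : Fin d,
          (Fin.addCases (fun _ => (j:ℝ) + 1) (bF j n) (Fin.castAdd m q)) -
            (Fin.addCases (fun _ => -((j:ℝ)) - 1) (aF j n) (Fin.castAdd m q)) = 2 * (j:ℝ) + 2 := by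
        intro q
        simp only [Fin.addCases_left]
        ring
      calc (∏ q : Fin d, ENNReal.ofReal
          ((Fin.addCases (fun _ => (j:ℝ) + 1) (bF j n) (Fin.castAdd m q)) -
           (Fin.addCases (fun _ => -((j:ℝ)) - 1) (aF j n) (Fin.castAdd m q))))
          = ∏ _q : Fin d, ENNReal.ofReal (2 * (j:ℝ) + 2) :=
            Finset.prod_congr rfl (fun q _ => by rw [hterm q])
        _ = (ENNReal.ofReal (2 * (j:ℝ) + 2)) ^ d := by
            rw [Finset.prod_const, Finset.card_univ, Fintype.card_fin]
        _ = ENNReal.ofReal ((2 * (j:ℝ) + 2) ^ d) :=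
            (ENNReal.ofReal_pow (by have := Nat.cast_nonneg (α := ℝ) j; linarith) d).symm
    have hR : (∏ r : Fin m, ENNReal.ofReal
        ((Fin.addCases (fun _ => (j:ℝ) + 1) (bF j n) (Fin.natAdd d r)) -
         (Fin.addCases (fun _ => -((j:ℝ)) - 1) (aF j n) (Fin.natAdd d r))))
        = volume (BF j n) := by
      rw [hab j n, volume_box]
      apply Finset.prod_congr rfl
      intro r _
      simp [Fin.addCases_right]
    rw [hL, hR]
    rw [mul_comm]
    refine le_trans (mul_le_mul_left (hvol j n) _) ?_
    rw [← ENNReal.ofReal_mul (by positivity)]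
    apply ENNReal.ofReal_le_ofReal
    set c := (2 * (j:ℝ) + 2) ^ d with hcdef
    have hc0 : (0:ℝ) < c := lt_of_lt_of_le one_pos (hc1 j)
    have e1 : (ε ^ (2 ^ (j + 1)) / c) * c = ε ^ (2 ^ (j + 1)) :=
      div_mul_cancel₀ _ hc0.ne'
    have hle : i + 1 ≤ 2 ^ (j + 1) * (n + 1) := by
      have hk := key_decode i
      calc i + 1 = 2 ^ j * (2 * n + 1) := hk
        _ ≤ 2 ^ j * (2 * (n + 1)) := Nat.mul_le_mul_left _ (by omega)
        _ = 2 ^ (j + 1) * (n + 1) := by ring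
    calc (ε ^ (2 ^ (j + 1)) / c) ^ (n + 1) * c
        = (ε ^ (2 ^ (j + 1)) / c) ^ n * ((ε ^ (2 ^ (j + 1)) / c) * c) := by ring
      _ = (ε ^ (2 ^ (j + 1)) / c) ^ n * ε ^ (2 ^ (j + 1)) := by rw [e1]
      _ ≤ (ε ^ (2 ^ (j + 1))) ^ n * ε ^ (2 ^ (j + 1)) := by
          gcongr
          exact div_le_self (pow_nonneg hε.le _) (hc1 j)
      _ = ε ^ (2 ^ (j + 1) * (n + 1)) := by rw [← pow_succ, ← pow_mul]
      _ ≤ ε ^ (i + 1) := pow_le_pow_of_le_one hε.le hε1.le hle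

lemma micro_union {k : ℕ} {A B : Set (EuclideanSpace ℝ (Fin k))}
    (hA : Microscopic A) (hB : Microscopic B) : Microscopic (A ∪ B) := by
  apply micro_of_small
  intro ε hε hε1
  obtain ⟨BA, hA1, hA2, hA3⟩ := hA (ε ^ 2) (by positivity)
  obtain ⟨BB, hB1, hB2, hB3⟩ := hB (ε ^ 2) (by positivity)
  refine ⟨fun n => if Even n then BA (n / 2) else BB (n / 2), fun n => ?_, ?_, fun n => ?_⟩
  · dsimp only; split
    · exact hA1 _
    · exact hB1 _
  · rintro x (hx | hx)
    · obtain ⟨j, hj⟩ := Set.mem_iUnion.1 (hA2 hx)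
      refine Set.mem_iUnion.2 ⟨2 * j, ?_⟩
      have h2 : Even (2 * j) := even_two_mul j
      simp only [h2, if_true]
      have h3 : 2 * j / 2 = j := by omega
      rw [h3]; exact hj
    · obtain ⟨j, hj⟩ := Set.mem_iUnion.1 (hB2 hx)
      refine Set.mem_iUnion.2 ⟨2 * j + 1, ?_⟩
      have h2 : ¬ Even (2 * j + 1) := by simp [Nat.even_add_one, parity_simps]
      simp only [h2, if_false]
      have h3 : (2 * j + 1) / 2 = j := by omega
      rw [h3]; exact hj
  · have key : ∀ j : ℕ, (ε ^ 2) ^ (j + 1) = ε ^ (2 * j + 2) := fun j => by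
      rw [← pow_mul]; ring_nf
    dsimp only; split
    · refine (hA3 _).trans (ENNReal.ofReal_le_ofReal ?_)
      rw [key]
      exact pow_le_pow_of_le_one hε.le hε1.le (by omega)
    · rename_i hodd
      refine (hB3 _).trans (ENNReal.ofReal_le_ofReal ?_)
      rw [key]
      have : ¬ (n % 2 = 0) := by simpa [Nat.even_iff] using hodd
      exact pow_le_pow_of_le_one hε.le hε1.le (by omega)


theorem stmt12
    (d m : ℕ)
    (E : Set (EuclideanSpace ℝ (Fin d))) (F : Set (EuclideanSpace ℝ (Fin m)))
    (hE : Microscopic E) (hF : Microscopic F) :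
    Microscopic {x : EuclideanSpace ℝ (Fin (d + m)) |
      WithLp.toLp 2 (fun i : Fin d => x (Fin.castAdd m i)) ∈ E ∨
      WithLp.toLp 2 (fun j : Fin m => x (Fin.natAdd d j)) ∈ F} := by
  have heq : {x : EuclideanSpace ℝ (Fin (d + m)) |
      WithLp.toLp 2 (fun i : Fin d => x (Fin.castAdd m i)) ∈ E ∨
      WithLp.toLp 2 (fun j : Fin m => x (Fin.natAdd d j)) ∈ F}
    = {x : EuclideanSpace ℝ (Fin (d + m)) | WithLp.toLp 2 (fun i : Fin d => x (Fin.castAdd m i)) ∈ E}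
      ∪ {x : EuclideanSpace ℝ (Fin (d + m)) | WithLp.toLp 2 (fun j : Fin m => x (Fin.natAdd d j)) ∈ F} :=
    Set.setOf_or ▸ rfl
  rw [heq]
  exact micro_union (micro_cyl_left m hE) (micro_cyl_right d hF)
end

section
/- Let d be a positive integer. A set X ⊆ ℝ^d is microscopic if and only if there is a microscopic set E ⊆ ℝ such that X ⊆ E^⋈d, where E^⋈d = {x ∈ ℝ^d : at least one coordinate of x lies in E}. -/
open Filter Set Topology MeasureTheory
open scoped ENNReal NNReal

open MeasureTheory Set in
lemma decomp_unique : ∀ (i j i' j' : ℕ), 2^i*(2*j+1) = 2^i'*(2*j'+1) → i = i' ∧ j = j' := by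
  intro i
  induction i with
  | zero =>
    intro j i' j' h
    cases i' with
    | zero => simp at h; omega
    | succ i' =>
      rw [pow_succ, mul_comm (2^i') 2, mul_assoc] at h
      generalize 2^i' * (2*j'+1) = u at h
      omega
  | succ i ih =>
    intro j i' j' h
    cases i' with
    | zero =>
      rw [pow_succ, mul_comm (2^i) 2, mul_assoc] at h
      generalize 2^i * (2*j+1) = u at h
      omega
    | succ i' =>
      rw [pow_succ, mul_comm (2^i) 2, mul_assoc, pow_succ, mul_comm (2^i') 2, mul_assoc] at h
      have h2 : 2^i*(2*j+1) = 2^i'*(2*j'+1) := by omega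
      have := ih j i' j' h2
      omega

lemma decomp_exists (m : ℕ) : ∃ p n : ℕ, m + 1 = 2^p * (2*n+1) := by
  obtain ⟨k, o, ho, h⟩ := Nat.exists_eq_two_pow_mul_odd (n := m+1) (by omega)
  obtain ⟨n, hn⟩ := ho
  subst hn
  exact ⟨k, n, h⟩

noncomputable def aux13dec (m : ℕ) : ℕ × ℕ :=
  ((decomp_exists m).choose, (decomp_exists m).choose_spec.choose)

lemma aux13dec_spec (m : ℕ) : m + 1 = 2^(aux13dec m).1 * (2*(aux13dec m).2+1) :=
  (decomp_exists m).choose_spec.choose_spec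

lemma aux13dec_eq (p n : ℕ) : aux13dec (2^p*(2*n+1) - 1) = (p, n) := by
  have hpos : 0 < 2^p*(2*n+1) := by positivity
  have h := aux13dec_spec (2^p*(2*n+1) - 1)
  rw [Nat.sub_add_cancel hpos] at h
  have := decomp_unique _ _ _ _ h.symm
  ext <;> simp [this.1, this.2]

lemma aux13boxVolume {d : ℕ} (a b : Fin d → ℝ) :
    volume {x : EuclideanSpace ℝ (Fin d) | ∀ i, x i ∈ Set.Icc (a i) (b i)} =
      ∏ i, ENNReal.ofReal (b i - a i) := by
  have hset : {x : EuclideanSpace ℝ (Fin d) | ∀ i, x i ∈ Set.Icc (a i) (b i)} =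
      ((MeasurableEquiv.toLp 2 (Fin d → ℝ)).symm) ⁻¹' (Set.univ.pi fun i => Set.Icc (a i) (b i)) := by
    ext x
    simp [MeasurableEquiv.coe_toLp_symm, Set.mem_pi, WithLp.equiv, Pi.le_def, Set.mem_Icc]
    constructor
    · intro h; exact ⟨fun i => (h i).1, fun i => (h i).2⟩
    · intro h i; exact ⟨h.1 i, h.2 i⟩
  rw [hset, (EuclideanSpace.volume_preserving_symm_measurableEquiv_toLp (Fin d)).measure_preimage
    (MeasurableSet.univ_pi fun i => measurableSet_Icc).nullMeasurableSet,
    volume_pi_pi]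
  simp [Real.volume_Icc]

lemma aux13backward {d : ℕ} (hd : 0 < d) (X : Set (EuclideanSpace ℝ (Fin d))) (E : Set ℝ)
    (hE : MicroscopicR E) (hXE : X ⊆ {x : EuclideanSpace ℝ (Fin d) | ∃ i, x i ∈ E}) :
    Microscopic X := by
  intro ε hε
  set ε' : ℝ := min ε (1/2) with hε'def
  have hε'pos : 0 < ε' := lt_min hε (by norm_num)
  have hε'le1 : ε' ≤ 1 := le_trans (min_le_right _ _) (by norm_num)
  have hε'le : ε' ≤ ε := min_le_left _ _
  set C : ℕ → ℝ := fun p => (2*((p/d : ℕ)+1) : ℝ)^(d-1) with hCdef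
  have hC1 : ∀ p, 1 ≤ C p := by
    intro p
    apply one_le_pow₀
    have : (0:ℝ) ≤ ((p/d : ℕ) : ℝ) := Nat.cast_nonneg _
    linarith
  have hCpos : ∀ p, 0 < C p := fun p => lt_of_lt_of_le one_pos (hC1 p)
  set η : ℕ → ℝ := fun p => ε'^(2^(p+1)) / C p with hηdef
  have hηpos : ∀ p, 0 < η p := fun p => div_pos (pow_pos hε'pos _) (hCpos p)
  choose I hIcov hIvol using fun p => hE (η p) (hηpos p)
  -- the coordinate for index p
  have hcoord : ∀ p : ℕ, p % d < d := fun p => Nat.mod_lt _ hd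
  set A : ℕ → Fin d → ℝ := fun m' i =>
    if i = (⟨(aux13dec m').1 % d, hcoord _⟩ : Fin d) then (I (aux13dec m').1 (aux13dec m').2).1
    else -(((aux13dec m').1/d : ℕ)+1 : ℝ) with hAdef
  set Bd : ℕ → Fin d → ℝ := fun m' i =>
    if i = (⟨(aux13dec m').1 % d, hcoord _⟩ : Fin d) then (I (aux13dec m').1 (aux13dec m').2).2
    else (((aux13dec m').1/d : ℕ)+1 : ℝ) with hBdef
  refine ⟨fun m' => {x | ∀ i, x i ∈ Set.Icc (A m' i) (Bd m' i)}, fun m' => ⟨A m', Bd m', rfl⟩,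
    ?_, ?_⟩
  · -- coverage
    intro x hx
    obtain ⟨i0, hi0⟩ := hXE hx
    have hne : (Finset.univ : Finset (Fin d)).Nonempty := ⟨i0, Finset.mem_univ _⟩
    set r : ℝ := Finset.univ.sup' hne (fun j => |x j|) with hrdef
    set m : ℕ := ⌈r⌉₊ with hmdef
    set p : ℕ := i0.1 + d * m with hpdef
    have hpmod : p % d = i0.1 := by
      rw [hpdef, Nat.add_mul_mod_self_left, Nat.mod_eq_of_lt i0.2]
    have hpdiv : p / d = m := by
      rw [hpdef, Nat.add_mul_div_left _ _ hd, Nat.div_eq_of_lt i0.2, Nat.zero_add]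
    have hx0 : x i0 ∈ ⋃ n, Set.Icc (I p n).1 (I p n).2 := hIcov p hi0
    obtain ⟨n, hn⟩ := Set.mem_iUnion.mp hx0
    refine Set.mem_iUnion.mpr ⟨2^p*(2*n+1) - 1, ?_⟩
    intro i
    simp only [hAdef, hBdef, aux13dec_eq p n]
    have hii0 : (⟨p % d, hcoord _⟩ : Fin d) = i0 := Fin.ext hpmod
    by_cases hi : i = (⟨p % d, hcoord _⟩ : Fin d)
    · simp only [if_pos hi]
      rw [hi, hii0]
      exact hn
    · simp only [if_neg hi]
      have hxi : |x i| ≤ r := Finset.le_sup' (fun j => |x j|) (Finset.mem_univ i)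
      have hrm : r ≤ (m : ℝ) := Nat.le_ceil r
      rw [hpdiv]
      have h2 := abs_le.mp (hxi.trans hrm)
      exact ⟨by linarith [h2.1], by linarith [h2.2]⟩
  · -- volume
    intro m'
    set p := (aux13dec m').1
    set n := (aux13dec m').2
    set i0 : Fin d := ⟨p % d, hcoord _⟩
    have hvol : volume {x : EuclideanSpace ℝ (Fin d) | ∀ i, x i ∈ Set.Icc (A m' i) (Bd m' i)}
        = ∏ i, ENNReal.ofReal (Bd m' i - A m' i) := aux13boxVolume _ _
    rw [hvol]
    have hsplit : ∏ i, ENNReal.ofReal (Bd m' i - A m' i) =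
        ENNReal.ofReal ((I p n).2 - (I p n).1) *
          ENNReal.ofReal (2*((p/d : ℕ)+1 : ℝ)) ^ (d-1) := by
      rw [← Finset.mul_prod_erase Finset.univ _ (Finset.mem_univ i0)]
      congr 1
      · simp only [hAdef, hBdef]
        rw [if_pos rfl, if_pos rfl]
      · rw [Finset.prod_congr rfl (fun i hi => ?_), Finset.prod_const,
          Finset.card_erase_of_mem (Finset.mem_univ _), Finset.card_univ, Fintype.card_fin]
        have hine : i ≠ i0 := Finset.ne_of_mem_erase hi
        simp only [hAdef, hBdef]
        rw [if_neg hine, if_neg hine]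
        ring_nf
        rfl
    rw [hsplit]
    have h1 : ENNReal.ofReal ((I p n).2 - (I p n).1) ≤ ENNReal.ofReal (η p ^ (n+1)) := by
      have := hIvol p n
      rwa [Real.volume_Icc] at this
    have h2 : ENNReal.ofReal (2*((p/d : ℕ)+1 : ℝ)) ^ (d-1) = ENNReal.ofReal (C p) := by
      rw [hCdef, ← ENNReal.ofReal_pow (by positivity)]
    rw [h2]
    have key : η p ^ (n+1) * C p ≤ ε ^ (m'+1) := by
      have hmp : m' + 1 = 2^p*(2*n+1) := aux13dec_spec m'
      have hle : m' + 1 ≤ 2^(p+1)*(n+1) := by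
        rw [hmp, pow_succ, mul_assoc]
        exact Nat.mul_le_mul_left _ (by omega)
      have hcle : C p ≤ (C p)^(n+1) := le_self_pow₀ (hC1 p) (by omega)
      have e0 : η p ^ (n+1) * C p = ε'^(2^(p+1)*(n+1)) * (C p / (C p)^(n+1)) := by
        simp only [hηdef]
        rw [div_pow, ← pow_mul]
        field_simp
      have e1 : η p ^ (n+1) * C p ≤ ε' ^ (2^(p+1)*(n+1)) := by
        rw [e0]
        exact mul_le_of_le_one_right (pow_nonneg hε'pos.le _)
          (div_le_one_of_le₀ hcle (pow_nonneg (hCpos p).le _))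
      have e2 : ε' ^ (2^(p+1)*(n+1)) ≤ ε' ^ (m'+1) :=
        pow_le_pow_of_le_one hε'pos.le hε'le1 hle
      have e3 : ε' ^ (m'+1) ≤ ε ^ (m'+1) := pow_le_pow_left₀ hε'pos.le hε'le _
      linarith
    calc ENNReal.ofReal ((I p n).2 - (I p n).1) * ENNReal.ofReal (C p)
        ≤ ENNReal.ofReal (η p ^ (n+1)) * ENNReal.ofReal (C p) := mul_le_mul_left h1 _
      _ = ENNReal.ofReal (η p ^ (n+1) * C p) := (ENNReal.ofReal_mul (by positivity)).symm
      _ ≤ ENNReal.ofReal (ε ^ (m'+1)) := ENNReal.ofReal_le_ofReal key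

lemma two_mul_le_four_pow : ∀ s : ℕ, 2*s ≤ 4^s := by
  intro s
  induction s with
  | zero => simp
  | succ s ih =>
    have h1 : 1 ≤ 4^s := Nat.one_le_pow _ _ (by norm_num)
    calc 2*(s+1) = 2*s + 2 := by ring
      _ ≤ 4^s + 2 := by omega
      _ ≤ 4^(s+1) := by rw [pow_succ]; omega

lemma aux13forward {d : ℕ} (hd : 0 < d) (X : Set (EuclideanSpace ℝ (Fin d)))
    (hX : Microscopic X) :
    ∃ E : Set ℝ, MicroscopicR E ∧ X ⊆ {x : EuclideanSpace ℝ (Fin d) | ∃ i, x i ∈ E} := by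
  choose Bf hbox hcov hvol using fun k : ℕ => hX ((4:ℝ)⁻¹ ^ (d * 4^k)) (by positivity)
  choose af bf hab using fun k n => hbox k n
  -- shortest side
  have hside : ∀ k n, ∃ i : Fin d, bf k n i - af k n i ≤ (4:ℝ)⁻¹ ^ (4^k*(n+1)) := by
    intro k n
    by_contra hcon
    push_neg at hcon
    set c : ℝ := (4:ℝ)⁻¹ ^ (4^k*(n+1)) with hcdef
    have hc : 0 < c := by positivity
    have hv : volume (Bf k n) = ∏ i, ENNReal.ofReal (bf k n i - af k n i) := by
      rw [hab]; exact aux13boxVolume _ _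
    have heq : ((4:ℝ)⁻¹ ^ (d * 4^k)) ^ (n+1) = c ^ d := by
      rw [hcdef, ← pow_mul, ← pow_mul]
      ring_nf
    have hle : ENNReal.ofReal (∏ i, (bf k n i - af k n i)) ≤ ENNReal.ofReal (c ^ d) := by
      rw [ENNReal.ofReal_prod_of_nonneg (fun i _ => le_of_lt (lt_trans hc (hcon i)))]
      rw [← hv, ← heq]
      exact hvol k n
    have hle' : ∏ i, (bf k n i - af k n i) ≤ c ^ d :=
      (ENNReal.ofReal_le_ofReal_iff (by positivity)).mp hle
    have hlt : c ^ d < ∏ i, (bf k n i - af k n i) := by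
      have := Finset.prod_lt_prod_of_nonempty (f := fun _ : Fin d => c)
        (g := fun i => bf k n i - af k n i) (s := Finset.univ)
        (fun i _ => hc) (fun i _ => hcon i) ⟨⟨0, hd⟩, Finset.mem_univ _⟩
      rwa [Finset.prod_const, Finset.card_univ, Fintype.card_fin] at this
    linarith
  choose idx hidx using hside
  set J : ℕ → ℕ → ℝ × ℝ := fun k n => (af k n (idx k n), bf k n (idx k n)) with hJdef
  set U : ℕ → Set ℝ := fun k => ⋃ n, Set.Icc (J k n).1 (J k n).2 with hUdef
  refine ⟨{y | ∀ k, ∃ k', k ≤ k' ∧ y ∈ U k'}, ?_, ?_⟩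
  · -- MicroscopicR
    intro ε hε
    obtain ⟨s, hs⟩ := exists_pow_lt_of_lt_one hε (by norm_num : (4:ℝ)⁻¹ < 1)
    refine ⟨fun m => J (s + (aux13dec m).1) (aux13dec m).2, ?_, ?_⟩
    · intro y hy
      obtain ⟨k', hk', hyU⟩ := hy s
      obtain ⟨j, hj⟩ := Set.mem_iUnion.mp hyU
      refine Set.mem_iUnion.mpr ⟨2^(k'-s)*(2*j+1) - 1, ?_⟩
      have hsk : s + (k' - s) = k' := by omega
      simp only [aux13dec_eq (k'-s) j, hsk]
      exact hj
    · intro m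
      set i := (aux13dec m).1
      set j := (aux13dec m).2
      rw [Real.volume_Icc]
      apply ENNReal.ofReal_le_ofReal
      have h1 : bf (s+i) j (idx (s+i) j) - af (s+i) j (idx (s+i) j)
          ≤ (4:ℝ)⁻¹ ^ (4^(s+i)*(j+1)) := hidx (s+i) j
      refine h1.trans ?_
      have hexp : s*(m+1) ≤ 4^(s+i)*(j+1) := by
        have hmp : m + 1 = 2^i*(2*j+1) := aux13dec_spec m
        calc s*(m+1) = s*(2^i*(2*j+1)) := by rw [hmp]
          _ ≤ s*(2^i*(2*(j+1))) := Nat.mul_le_mul_left _ (Nat.mul_le_mul_left _ (by omega))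
          _ = (2*s)*(2^i*(j+1)) := by ring
          _ ≤ 4^s*(4^i*(j+1)) := Nat.mul_le_mul (two_mul_le_four_pow s)
              (Nat.mul_le_mul_right _ (Nat.pow_le_pow_left (by norm_num) i))
          _ = 4^(s+i)*(j+1) := by rw [pow_add]; ring
      calc (4:ℝ)⁻¹ ^ (4^(s+i)*(j+1)) ≤ (4:ℝ)⁻¹ ^ (s*(m+1)) :=
            pow_le_pow_of_le_one (by norm_num) (by norm_num) hexp
        _ = ((4:ℝ)⁻¹ ^ s) ^ (m+1) := by rw [← pow_mul]
        _ ≤ ε ^ (m+1) := pow_le_pow_left₀ (by positivity) hs.le _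
  · -- coverage
    intro x hx
    have hxk : ∀ k, ∃ n, x ∈ Bf k n := fun k => Set.mem_iUnion.mp (hcov k hx)
    choose nk hnk using hxk
    set f : ℕ → Fin d := fun k => idx k (nk k) with hfdef
    obtain ⟨i, hinf⟩ := Finite.exists_infinite_fiber f
    rw [Set.infinite_coe_iff] at hinf
    refine ⟨i, fun k => ?_⟩
    obtain ⟨k', hk'mem, hk'gt⟩ := hinf.exists_gt k
    refine ⟨k', hk'gt.le, ?_⟩
    have hxB : x ∈ Bf k' (nk k') := hnk k'
    rw [hab] at hxB
    have hxi : x (f k') ∈ Set.Icc (af k' (nk k') (f k')) (bf k' (nk k') (f k')) := hxB _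
    have hfi : f k' = i := hk'mem
    rw [hfi] at hxi
    have hfi' : idx k' (nk k') = i := hfi
    exact Set.mem_iUnion.mpr ⟨nk k', by simp only [hUdef, hJdef, hfi']; exact hxi⟩

theorem stmt13
    (d : ℕ) (hd : 0 < d) (X : Set (EuclideanSpace ℝ (Fin d))) :
    Microscopic X ↔
      ∃ E : Set ℝ, MicroscopicR E ∧ X ⊆ {x : EuclideanSpace ℝ (Fin d) | ∃ i, x i ∈ E} := by
  constructor
  · exact fun h => aux13forward hd X h
  · rintro ⟨E, hE, hXE⟩
    exact aux13backward hd X E hE hXE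
end

section
/- Let d be a positive integer. If X ⊆ ℝ^d is microscopic, then the Hausdorff dimension of X is at most d−1. -/
open Filter Set Topology MeasureTheory
open scoped ENNReal NNReal

section AuxMicroscopic

lemma aux_box_cover {d : ℕ} {s η R : ℝ} (hs : 0 < s) (a b : Fin d → ℝ)
    (hη : 0 < η) (hηR : 2 * η ≤ R) (hside : ∀ i, b i - a i ≤ 2 * R) (i0 : Fin d)
    (hi0 : b i0 - a i0 ≤ η) :
    ∃ T : ℕ → Set (Fin d → ℝ),
      (Set.univ.pi fun i => Set.Icc (a i) (b i)) ⊆ ⋃ j, T j ∧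
      (∀ j, EMetric.diam (T j) ≤ ENNReal.ofReal η) ∧
      ∑' j, EMetric.diam (T j) ^ s ≤ ENNReal.ofReal ((3 * R / η) ^ (d - 1) * η ^ s) := by
  classical
  have hR : 0 < R := by nlinarith
  set m : ℕ := ⌈2 * R / η⌉₊ + 1 with hm
  have hm1 : 1 ≤ m := Nat.le_add_left 1 _
  have hceil : 2 * R / η ≤ (⌈2 * R / η⌉₊ : ℝ) := Nat.le_ceil _
  have hdiv : 2 * R / η * η = 2 * R := div_mul_cancel₀ _ hη.ne'
  have hmR : 2 * R ≤ (m : ℝ) * η := by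
    rw [hm]; push_cast
    nlinarith [mul_le_mul_of_nonneg_right hceil hη.le]
  have hm3 : (m : ℝ) * η ≤ 3 * R := by
    have h1 : (⌈2 * R / η⌉₊ : ℝ) < 2 * R / η + 1 := Nat.ceil_lt_add_one (by positivity)
    rw [hm]; push_cast
    nlinarith [mul_lt_mul_of_pos_right h1 hη]
  set cube : ({ i : Fin d // i ≠ i0 } → Fin m) → Set (Fin d → ℝ) := fun g => Set.univ.pi fun i =>
    if h : i = i0 then Set.Icc (a i0) (b i0)
    else Set.Icc (a i + (g ⟨i, h⟩ : ℕ) * η) (a i + ((g ⟨i, h⟩ : ℕ) + 1) * η) with hcube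
  have hcube_diam : ∀ g, EMetric.diam (cube g) ≤ ENNReal.ofReal η := by
    intro g
    refine EMetric.diam_pi_le_of_le fun i => ?_
    by_cases h : i = i0
    · simp only [hcube, dif_pos h, Real.ediam_Icc]
      exact ENNReal.ofReal_le_ofReal hi0
    · simp only [hcube, dif_neg h, Real.ediam_Icc]
      apply ENNReal.ofReal_le_ofReal
      have : a i + ((g ⟨i, h⟩ : ℕ) + 1) * η - (a i + (g ⟨i, h⟩ : ℕ) * η) = η := by ring
      rw [this]
  have hcover : (Set.univ.pi fun i => Set.Icc (a i) (b i)) ⊆ ⋃ g, cube g := by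
    intro x hx
    rw [Set.mem_pi] at hx
    have hx' : ∀ i, x i ∈ Set.Icc (a i) (b i) := fun i => hx i (Set.mem_univ i)
    refine Set.mem_iUnion.2 ⟨fun i => ⟨min ⌊(x i.1 - a i.1) / η⌋₊ (m - 1),
      lt_of_le_of_lt (min_le_right _ _) (Nat.sub_lt hm1 one_pos)⟩, ?_⟩
    rw [Set.mem_pi]
    intro i _
    by_cases h : i = i0
    · simp only [hcube, dif_pos h]
      subst h; exact hx' i
    · simp only [hcube, dif_neg h]
      set k : ℕ := ⌊(x i - a i) / η⌋₊ with hk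
      have hxa : 0 ≤ (x i - a i) / η := div_nonneg (by linarith [(hx' i).1]) hη.le
      have hfl : (k : ℝ) * η ≤ x i - a i := by
        have := Nat.floor_le hxa
        calc (k : ℝ) * η ≤ (x i - a i) / η * η := by nlinarith
        _ = x i - a i := div_mul_cancel₀ _ hη.ne'
      have hlow : a i + ((min k (m-1) : ℕ) : ℝ) * η ≤ x i := by
        have h1 : ((min k (m-1) : ℕ) : ℝ) ≤ (k : ℝ) := by exact_mod_cast min_le_left _ _
        nlinarith
      refine ⟨hlow, ?_⟩
      rcases le_or_gt k (m - 1) with hc | hc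
      · rw [min_eq_left hc]
        have h2 : (x i - a i) / η < k + 1 := Nat.lt_floor_add_one _
        have h3 : x i - a i < ((k : ℝ) + 1) * η := by
          calc x i - a i = (x i - a i) / η * η := (div_mul_cancel₀ _ hη.ne').symm
          _ < ((k : ℝ) + 1) * η := by nlinarith
        linarith
      · rw [min_eq_right hc.le]
        have h4 : ((m - 1 : ℕ) : ℝ) + 1 = (m : ℝ) := by
          push_cast [Nat.cast_sub hm1]; ring
        rw [h4]
        have := (hx' i).2
        have := hside i
        linarith
  set T : ℕ → Set (Fin d → ℝ) := fun j =>
    if h : j < Fintype.card ({ i : Fin d // i ≠ i0 } → Fin m) then cube ((Fintype.equivFin ({ i : Fin d // i ≠ i0 } → Fin m)).symm ⟨j, h⟩) else ∅ with hT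
  refine ⟨T, ?_, ?_, ?_⟩
  · intro x hx
    obtain ⟨g, hg⟩ := Set.mem_iUnion.1 (hcover hx)
    refine Set.mem_iUnion.2 ⟨(Fintype.equivFin ({ i : Fin d // i ≠ i0 } → Fin m) g : ℕ), ?_⟩
    simp only [hT, dif_pos (Fintype.equivFin ({ i : Fin d // i ≠ i0 } → Fin m) g).isLt]
    have : (⟨(Fintype.equivFin ({ i : Fin d // i ≠ i0 } → Fin m) g : ℕ), (Fintype.equivFin ({ i : Fin d // i ≠ i0 } → Fin m) g).isLt⟩ : Fin (Fintype.card ({ i : Fin d // i ≠ i0 } → Fin m)))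
        = Fintype.equivFin ({ i : Fin d // i ≠ i0 } → Fin m) g := rfl
    rw [this, Equiv.symm_apply_apply]
    exact hg
  · intro j
    by_cases h : j < Fintype.card ({ i : Fin d // i ≠ i0 } → Fin m)
    · simp only [hT, dif_pos h]; exact hcube_diam _
    · simp only [hT, dif_neg h, EMetric.diam, Metric.ediam_empty]; exact zero_le
  · have hTdiam : ∀ j, EMetric.diam (T j) ≤ ENNReal.ofReal η := by
      intro j
      by_cases h : j < Fintype.card ({ i : Fin d // i ≠ i0 } → Fin m)
      · simp only [hT, dif_pos h]; exact hcube_diam _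
      · simp only [hT, dif_neg h, EMetric.diam, Metric.ediam_empty]; exact zero_le
    have hzero : ∀ j ∉ Finset.range (Fintype.card ({ i : Fin d // i ≠ i0 } → Fin m)), EMetric.diam (T j) ^ s = 0 := by
      intro j hj
      have : ¬ j < Fintype.card ({ i : Fin d // i ≠ i0 } → Fin m) := by simpa using hj
      simp only [hT, dif_neg this, EMetric.diam, Metric.ediam_empty]
      exact ENNReal.zero_rpow_of_pos hs
    rw [tsum_eq_sum hzero]
    have hcard : Fintype.card ({ i : Fin d // i ≠ i0 } → Fin m) = m ^ (d - 1) := by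
      rw [Fintype.card_fun, Fintype.card_fin]
      congr 1
      rw [Fintype.card_subtype_compl, Fintype.card_subtype_eq, Fintype.card_fin]
    calc ∑ j ∈ Finset.range (Fintype.card ({ i : Fin d // i ≠ i0 } → Fin m)), EMetric.diam (T j) ^ s
        ≤ ∑ j ∈ Finset.range (Fintype.card ({ i : Fin d // i ≠ i0 } → Fin m)), ENNReal.ofReal η ^ s :=
          Finset.sum_le_sum fun j _ => ENNReal.rpow_le_rpow (hTdiam j) hs.le
      _ = (Fintype.card ({ i : Fin d // i ≠ i0 } → Fin m) : ℝ≥0∞) * ENNReal.ofReal η ^ s := by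
          rw [Finset.sum_const, Finset.card_range, nsmul_eq_mul]
      _ ≤ ENNReal.ofReal ((3 * R / η) ^ (d - 1) * η ^ s) := by
          rw [hcard, ENNReal.ofReal_rpow_of_pos hη]
          have h5 : ((m ^ (d - 1) : ℕ) : ℝ≥0∞) = ENNReal.ofReal ((m : ℝ) ^ (d - 1)) := by
            rw [← ENNReal.ofReal_natCast]; push_cast; ring_nf
          rw [h5, ← ENNReal.ofReal_mul (by positivity)]
          apply ENNReal.ofReal_le_ofReal
          apply mul_le_mul_of_nonneg_right _ (Real.rpow_nonneg hη.le s)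
          exact pow_le_pow_left₀ (by positivity) ((le_div_iff₀ hη).2 hm3) _

lemma aux_measure_zero {d : ℕ} (hd : 0 < d) {s : ℝ} (hs : ((d - 1 : ℕ) : ℝ) < s)
    (E : Set (Fin d → ℝ))
    (hE : ∀ θ : ℝ, 0 < θ → θ ≤ 2⁻¹ → ∃ a b : ℕ → Fin d → ℝ,
      (E ⊆ ⋃ n, Set.univ.pi fun i => Set.Icc (a n i) (b n i)) ∧
      ∀ n, (∏ i, ENNReal.ofReal (b n i - a n i)) ≤ ENNReal.ofReal ((θ ^ d) ^ (n + 1)))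
    {R : ℝ} (hR : 1 ≤ R) :
    μH[s] (E ∩ Set.univ.pi fun _ : Fin d => Set.Icc (-R) R) = 0 := by
  classical
  have hFin : Nonempty (Fin d) := ⟨⟨0, hd⟩⟩
  have hs0 : 0 < s := lt_of_le_of_lt (Nat.cast_nonneg (d - 1)) hs
  set t : ℝ := s - ((d - 1 : ℕ) : ℝ) with ht'
  have ht : 0 < t := by rw [ht']; linarith
  set q1 : ℝ := (2⁻¹ : ℝ) ^ t with hq1
  have hq1pos : 0 < q1 := Real.rpow_pos_of_pos (by norm_num) t
  have hq1lt : q1 < 1 := Real.rpow_lt_one (by norm_num) (by norm_num) ht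
  set ρ : ℝ≥0∞ := ENNReal.ofReal q1 with hρ'
  have hρlt : ρ < 1 := by rw [hρ']; exact ENNReal.ofReal_lt_one.2 hq1lt
  set K : ℝ≥0∞ := ENNReal.ofReal ((3 * R) ^ (d - 1)) * (1 - ρ)⁻¹ with hK'
  have hKne : K ≠ ∞ := by
    refine ENNReal.mul_ne_top ENNReal.ofReal_ne_top ?_
    rw [ENNReal.inv_ne_top]
    exact (tsub_pos_of_lt hρlt).ne'
  rw [MeasureTheory.Measure.hausdorffMeasure_apply, ← nonpos_iff_eq_zero]
  refine iSup₂_le fun r hr => ?_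
  have htend : Tendsto (fun j : ℕ => K * ρ ^ (j + 1)) atTop (𝓝 0) := by
    have h1 := ENNReal.tendsto_pow_atTop_nhds_zero_of_lt_one hρlt
    have h2 : Tendsto (fun j : ℕ => ρ ^ (j + 1)) atTop (𝓝 0) :=
      h1.comp (tendsto_add_atTop_nat 1)
    have h3 := ENNReal.Tendsto.const_mul h2 (Or.inr hKne)
    simpa using h3
  refine ge_of_tendsto htend ?_
  have hsmall : Tendsto (fun j : ℕ => ENNReal.ofReal ((2⁻¹ : ℝ) ^ (j + 1))) atTop (𝓝 0) := by
    have h1 : Tendsto (fun j : ℕ => (2⁻¹ : ℝ) ^ (j + 1)) atTop (𝓝 0) :=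
      (tendsto_pow_atTop_nhds_zero_of_lt_one (by norm_num) (by norm_num)).comp
        (tendsto_add_atTop_nat 1)
    simpa using ENNReal.tendsto_ofReal h1
  filter_upwards [hsmall.eventually_lt_const hr] with j hj
  set θ : ℝ := (2⁻¹ : ℝ) ^ (j + 1) with hθ'
  have hθ0 : 0 < θ := by positivity
  have hθ2 : θ ≤ 2⁻¹ := by
    calc θ = (2⁻¹ : ℝ) ^ (j + 1) := rfl
    _ ≤ (2⁻¹ : ℝ) ^ 1 := pow_le_pow_of_le_one (by norm_num) (by norm_num) (by omega)
    _ = 2⁻¹ := pow_one _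
  have hθ1 : θ ≤ 1 := hθ2.trans (by norm_num)
  have hθt : θ ^ t = q1 ^ (j + 1) := by
    rw [hθ', hq1, ← Real.rpow_natCast (2⁻¹ : ℝ) (j + 1), ← Real.rpow_mul (by norm_num),
      mul_comm, Real.rpow_mul (by norm_num), Real.rpow_natCast]
  clear_value θ
  obtain ⟨a, b, hcov, hvol⟩ := hE θ hθ0 hθ2
  set a' : ℕ → Fin d → ℝ := fun n i => max (a n i) (-R) with ha'
  set b' : ℕ → Fin d → ℝ := fun n i => min (b n i) R with hb'
  have hηpos : ∀ n : ℕ, (0:ℝ) < θ ^ (n + 1) := fun n => pow_pos hθ0 _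
  have hηθ : ∀ n : ℕ, θ ^ (n + 1) ≤ θ := fun n =>
    pow_le_of_le_one hθ0.le hθ1 (by omega)
  have hηR : ∀ n : ℕ, 2 * θ ^ (n + 1) ≤ R := by
    intro n
    have := hηθ n
    have : θ ^ (n+1) ≤ 2⁻¹ := le_trans this hθ2
    linarith
  have hmin : ∀ n : ℕ, ∃ i0 : Fin d, b' n i0 - a' n i0 ≤ θ ^ (n + 1) := by
    intro n
    by_contra hcon
    push_neg at hcon
    have hprodlt : (θ ^ (n + 1)) ^ d < ∏ i, (b' n i - a' n i) := by
      have h1 := Finset.prod_lt_prod_of_nonempty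
        (f := fun _ : Fin d => θ ^ (n + 1)) (g := fun i => b' n i - a' n i)
        (fun i _ => hηpos n) (fun i _ => hcon i) Finset.univ_nonempty
      simpa [Finset.prod_const, Finset.card_univ] using h1
    have hle1 : (∏ i, ENNReal.ofReal (b' n i - a' n i)) ≤ ENNReal.ofReal ((θ ^ d) ^ (n + 1)) := by
      refine le_trans (Finset.prod_le_prod' fun i _ => ?_) (hvol n)
      apply ENNReal.ofReal_le_ofReal
      have h1 : b' n i ≤ b n i := min_le_left _ _
      have h2 : a n i ≤ a' n i := le_max_left _ _
      linarith
    have hprod_eq : (∏ i, ENNReal.ofReal (b' n i - a' n i))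
        = ENNReal.ofReal (∏ i, (b' n i - a' n i)) :=
      (ENNReal.ofReal_prod_of_nonneg fun i _ => le_of_lt (lt_trans (hηpos n) (hcon i))).symm
    rw [hprod_eq] at hle1
    have h2 : (∏ i, (b' n i - a' n i)) ≤ (θ ^ d) ^ (n + 1) :=
      (ENNReal.ofReal_le_ofReal_iff (by positivity)).1 hle1
    have h3 : (θ ^ d) ^ (n + 1) = (θ ^ (n + 1)) ^ d := by
      rw [← pow_mul, ← pow_mul, Nat.mul_comm]
    rw [h3] at h2
    linarith
  choose i0 hi0 using hmin
  have happ : ∀ n : ℕ, ∃ T : ℕ → Set (Fin d → ℝ),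
      (Set.univ.pi fun i => Set.Icc (a' n i) (b' n i)) ⊆ ⋃ j, T j ∧
      (∀ j, EMetric.diam (T j) ≤ ENNReal.ofReal (θ ^ (n + 1))) ∧
      ∑' j, EMetric.diam (T j) ^ s ≤
        ENNReal.ofReal ((3 * R / θ ^ (n + 1)) ^ (d - 1) * (θ ^ (n + 1)) ^ s) := by
    intro n
    refine aux_box_cover hs0 (a' n) (b' n) (hηpos n) (hηR n) (fun i => ?_) (i0 n) (hi0 n)
    have h1 : b' n i ≤ R := min_le_right _ _
    have h2 : -R ≤ a' n i := le_max_right _ _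
    linarith
  choose T hTcov hTdiam hTsum using happ
  set U : ℕ → Set (Fin d → ℝ) := fun p => T (Nat.unpair p).1 (Nat.unpair p).2 with hU
  have hUcov : E ∩ (Set.univ.pi fun _ : Fin d => Set.Icc (-R) R) ⊆ ⋃ p, U p := by
    rintro x ⟨hxE, hxQ⟩
    rw [Set.mem_pi] at hxQ
    obtain ⟨n, hx⟩ := Set.mem_iUnion.1 (hcov hxE)
    have hx' : x ∈ Set.univ.pi fun i => Set.Icc (a' n i) (b' n i) := by
      rw [Set.mem_pi] at hx ⊢
      intro i hi
      exact ⟨max_le (hx i hi).1 (hxQ i hi).1, le_min (hx i hi).2 (hxQ i hi).2⟩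
    obtain ⟨jj, hjj⟩ := Set.mem_iUnion.1 (hTcov n hx')
    exact Set.mem_iUnion.2 ⟨Nat.pair n jj, by simpa [hU, Nat.unpair_pair] using hjj⟩
  have hUdiam : ∀ p, EMetric.diam (U p) ≤ r := by
    intro p
    refine le_trans (hTdiam _ _) (le_trans ?_ hj.le)
    exact ENNReal.ofReal_le_ofReal (hηθ _)
  have hreal : ∀ n : ℕ, (3 * R / θ ^ (n + 1)) ^ (d - 1) * (θ ^ (n + 1) : ℝ) ^ s
      ≤ (3 * R) ^ (d - 1) * (q1 ^ (j + 1) * q1 ^ n) := by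
    intro n
    have hη := hηpos n
    have hR0 : (0:ℝ) < R := by linarith
    have e2 : (θ ^ (n + 1) : ℝ) ^ s = (θ ^ (n + 1)) ^ (d - 1) * (θ ^ (n + 1)) ^ t := by
      rw [show s = ((d - 1 : ℕ) : ℝ) + t by rw [ht']; ring, Real.rpow_add hη,
        Real.rpow_natCast]
    have e3 : (θ ^ (n + 1) : ℝ) ^ t = (θ ^ t) ^ (n + 1) := by
      rw [← Real.rpow_natCast θ (n + 1), ← Real.rpow_mul hθ0.le,
        mul_comm, Real.rpow_mul hθ0.le, Real.rpow_natCast]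
    have e4 : ((θ : ℝ) ^ t) ^ (n + 1) ≤ q1 ^ (j + 1) * q1 ^ n := by
      rw [hθt, pow_succ']
      refine mul_le_mul_of_nonneg_left ?_ (by positivity)
      exact pow_le_pow_left₀ (by positivity)
        (pow_le_of_le_one hq1pos.le hq1lt.le (by omega)) n
    calc (3 * R / θ ^ (n + 1)) ^ (d - 1) * (θ ^ (n + 1) : ℝ) ^ s
        = (3 * R / θ ^ (n + 1) * θ ^ (n + 1)) ^ (d - 1) * (θ ^ (n + 1)) ^ t := by
          rw [e2, mul_pow]; ring
      _ = (3 * R) ^ (d - 1) * (θ ^ t) ^ (n + 1) := by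
          rw [div_mul_cancel₀ _ hη.ne', e3]
      _ ≤ (3 * R) ^ (d - 1) * (q1 ^ (j + 1) * q1 ^ n) :=
          mul_le_mul_of_nonneg_left e4 (by positivity)
  have key : ∑' p, (⨆ _ : (U p).Nonempty, EMetric.diam (U p) ^ s) ≤ K * ρ ^ (j + 1) := by
    calc ∑' p, (⨆ _ : (U p).Nonempty, EMetric.diam (U p) ^ s)
        ≤ ∑' p, EMetric.diam (U p) ^ s :=
          ENNReal.tsum_le_tsum fun p => iSup_le fun _ => le_rfl
      _ = ∑' q : ℕ × ℕ, EMetric.diam (T q.1 q.2) ^ s := by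
          rw [← Equiv.tsum_eq Nat.pairEquiv.symm
            (fun q : ℕ × ℕ => EMetric.diam (T q.1 q.2) ^ s)]
          rfl
      _ = ∑' n, ∑' jj, EMetric.diam (T n jj) ^ s := ENNReal.tsum_prod (f := fun n jj => EMetric.diam (T n jj) ^ s)
      _ ≤ ∑' n, ENNReal.ofReal ((3 * R / θ ^ (n + 1)) ^ (d - 1) * (θ ^ (n + 1)) ^ s) :=
          ENNReal.tsum_le_tsum hTsum
      _ ≤ ∑' n, ENNReal.ofReal ((3 * R) ^ (d - 1)) * (ENNReal.ofReal (q1 ^ (j + 1)) * ρ ^ n) := by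
          refine ENNReal.tsum_le_tsum fun n => ?_
          rw [hρ', ← ENNReal.ofReal_pow hq1pos.le, ← ENNReal.ofReal_mul (by positivity),
            ← ENNReal.ofReal_mul (by positivity)]
          exact ENNReal.ofReal_le_ofReal (hreal n)
      _ = K * ρ ^ (j + 1) := by
          rw [ENNReal.tsum_mul_left, ENNReal.tsum_mul_left, ENNReal.tsum_geometric,
            hK', hρ', ← ENNReal.ofReal_pow hq1pos.le]
          ring
  exact le_trans (iInf_le_of_le U (iInf_le_of_le hUcov (iInf_le _ hUdiam))) key

end AuxMicroscopic

theorem stmt14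
    (d : ℕ) (hd : 0 < d) (X : Set (EuclideanSpace ℝ (Fin d)))
    (hX : Microscopic X) :
    dimH X ≤ ((d - 1 : ℕ) : ℝ≥0∞) := by
  classical
  set e := WithLp.equiv 2 ((i : Fin d) → ℝ) with he
  set Y : Set (Fin d → ℝ) := ⇑e '' X with hY
  have hlip : LipschitzWith ((Fintype.card (Fin d) : ℝ≥0) ^ (1 / (2 : ℝ≥0∞)).toReal)
      ⇑e.symm := by
    rw [lipschitzWith_iff_dist_le_mul]
    intro x y
    have h1 := (PiLp.antilipschitzWith_ofLp 2 (fun _ : Fin d => ℝ)).le_mul_dist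
      (e.symm x) (e.symm y)
    simpa [he] using h1
  have hXY : dimH X ≤ dimH Y := by
    have hX' : X = ⇑e.symm '' Y := by rw [hY, Equiv.symm_image_image]
    rw [hX']
    exact hlip.dimH_image_le Y
  refine le_trans hXY ?_
  have hE : ∀ θ : ℝ, 0 < θ → θ ≤ 2⁻¹ → ∃ a b : ℕ → Fin d → ℝ,
      (Y ⊆ ⋃ n, Set.univ.pi fun i => Set.Icc (a n i) (b n i)) ∧
      ∀ n, (∏ i, ENNReal.ofReal (b n i - a n i)) ≤ ENNReal.ofReal ((θ ^ d) ^ (n + 1)) := by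
    intro θ hθ0 _
    obtain ⟨B, hBox, hBcov, hBvol⟩ := hX (θ ^ d) (by positivity)
    choose a b hab using hBox
    refine ⟨a, b, ?_, ?_⟩
    · rintro y ⟨x, hx, rfl⟩
      obtain ⟨n, hn⟩ := Set.mem_iUnion.1 (hBcov hx)
      rw [hab n] at hn
      refine Set.mem_iUnion.2 ⟨n, ?_⟩
      rw [Set.mem_pi]
      intro i _
      exact hn i
    · intro n
      refine le_trans (le_of_eq ?_) (hBvol n)
      have hmeas : MeasurableSet (B n) := by
        rw [hab n]
        have h4 : {x : EuclideanSpace ℝ (Fin d) | ∀ i, x i ∈ Set.Icc (a n i) (b n i)}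
            = (MeasurableEquiv.toLp 2 (Fin d → ℝ)).symm ⁻¹'
              (Set.univ.pi fun i => Set.Icc (a n i) (b n i)) := by
          ext x
          simp [MeasurableEquiv.coe_toLp_symm, Set.mem_pi, Pi.le_def, forall_and]
        rw [h4]
        exact (MeasurableSet.univ_pi fun i => measurableSet_Icc).preimage
          (MeasurableEquiv.toLp 2 (Fin d → ℝ)).symm.measurable
      have h2 := (PiLp.volume_preserving_toLp (Fin d)).measure_preimage
        hmeas.nullMeasurableSet
      have h3 : WithLp.toLp 2 ⁻¹' B n
          = Set.univ.pi fun i => Set.Icc (a n i) (b n i) := by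
        ext y
        rw [Set.mem_preimage, hab n]
        simp [Set.mem_pi, Pi.le_def, forall_and]
      rw [h3] at h2
      rw [← h2, volume_pi_pi]
      simp [Real.volume_Icc]
  refine dimH_le fun s' hs' => ?_
  by_contra hlt
  push_neg at hlt
  have hcast : ((d - 1 : ℕ) : ℝ) < (s' : ℝ) := by exact_mod_cast hlt
  have hzero : μH[(s' : ℝ)] Y = 0 := by
    have hsub : Y ⊆ ⋃ m : ℕ, Y ∩ Set.univ.pi
        fun _ : Fin d => Set.Icc (-(m + 1 : ℝ)) (m + 1 : ℝ) := by
      intro y hy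
      obtain ⟨m, hm⟩ := exists_nat_ge ‖y‖
      refine Set.mem_iUnion.2 ⟨m, hy, ?_⟩
      rw [Set.mem_pi]
      intro i _
      have h5 : |y i| ≤ ‖y‖ := by
        rw [← Real.norm_eq_abs]
        exact norm_le_pi_norm y i
      rw [Set.mem_Icc]
      constructor <;> [linarith [abs_le.1 (le_trans h5 hm) |>.1]; linarith [abs_le.1 (le_trans h5 hm) |>.2]]
    refine measure_mono_null hsub (measure_iUnion_null fun m => ?_)
    exact aux_measure_zero hd hcast Y hE (by push_cast; linarith [Nat.cast_nonneg (α := ℝ) m])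
  rw [hzero] at hs'
  exact (ENNReal.zero_ne_top hs').elim
end

section
/- Let d be a positive integer. There exists a microscopic set X ⊆ ℝ^d whose Hausdorff dimension is exactly d−1 (for instance X = {0} × ℝ^{d−1}). -/
open Filter Set Topology MeasureTheory
open scoped ENNReal NNReal

theorem stmt15 (d : ℕ) (hd : 0 < d) :
    ∃ X : Set (EuclideanSpace ℝ (Fin d)),
      Microscopic X ∧ dimH X = ((d - 1 : ℕ) : ℝ≥0∞) := by
  classical
  set i0 : Fin d := ⟨0, hd⟩
  set f : EuclideanSpace ℝ (Fin d) →ₗ[ℝ] ℝ :=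
    (EuclideanSpace.proj (𝕜 := ℝ) i0 : _ →L[ℝ] ℝ).toLinearMap with hf
  set K : Submodule ℝ (EuclideanSpace ℝ (Fin d)) := LinearMap.ker f with hK
  have hmemK : ∀ x : EuclideanSpace ℝ (Fin d), x ∈ K ↔ x i0 = 0 := by
    intro x
    rw [hK, LinearMap.mem_ker]
    rfl
  have hKtop : K ≠ ⊤ := by
    intro h
    have hm : EuclideanSpace.single i0 (1:ℝ) ∈ K := by rw [h]; trivial
    rw [hmemK] at hm
    simp at hm
  have hvol : volume (K : Set (EuclideanSpace ℝ (Fin d))) = 0 :=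
    MeasureTheory.Measure.addHaar_submodule volume K hKtop
  have habs : ∀ (x : EuclideanSpace ℝ (Fin d)) (i : Fin d), |x i| ≤ ‖x‖ := by
    intro x i
    rw [EuclideanSpace.norm_eq, ← Real.sqrt_sq_eq_abs]
    refine Real.sqrt_le_sqrt ?_
    calc x i ^ 2 = ‖x i‖ ^ 2 := by rw [Real.norm_eq_abs, sq_abs]
      _ ≤ _ := Finset.single_le_sum (fun j _ => sq_nonneg ‖x j‖) (Finset.mem_univ i)
  refine ⟨(K : Set (EuclideanSpace ℝ (Fin d))), ?_, ?_⟩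
  · -- Microscopic
    intro ε hε
    refine ⟨fun n => {x | ∀ i, x i ∈ Set.Icc
      (if i = i0 then 0 else -(n:ℝ)) (if i = i0 then 0 else (n:ℝ))}, ?_, ?_, ?_⟩
    · intro n; exact ⟨_, _, rfl⟩
    · intro x hx
      refine Set.mem_iUnion.2 ⟨⌈‖x‖⌉₊, ?_⟩
      intro i
      by_cases hi : i = i0
      · simp only [hi, if_pos rfl]
        have : x i0 = 0 := (hmemK x).1 hx
        rw [this, if_pos trivial, if_pos trivial]
        exact ⟨le_refl 0, le_refl 0⟩
      · simp only [if_neg hi]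
        have h1 : |x i| ≤ (⌈‖x‖⌉₊ : ℝ) := (habs x i).trans (Nat.le_ceil _)
        rw [abs_le] at h1
        exact ⟨h1.1, h1.2⟩
    · intro n
      have hsub : {x : EuclideanSpace ℝ (Fin d) | ∀ i, x i ∈ Set.Icc
          (if i = i0 then 0 else -(n:ℝ)) (if i = i0 then 0 else (n:ℝ))}
          ⊆ (K : Set (EuclideanSpace ℝ (Fin d))) := by
        intro x hx
        rw [Set.mem_setOf_eq] at hx
        have := hx i0
        simp only [if_pos rfl] at this
        exact (hmemK x).2 (le_antisymm this.2 this.1)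
      calc volume _ ≤ volume (K : Set (EuclideanSpace ℝ (Fin d))) := measure_mono hsub
        _ = 0 := hvol
        _ ≤ _ := zero_le
  · -- dimH
    have h1 : (K : Set (EuclideanSpace ℝ (Fin d))) = Subtype.val '' (univ : Set K) := by simp
    rw [h1, (isometry_subtype_coe).dimH_image, Real.dimH_univ_eq_finrank]
    have hsurj : LinearMap.range f = ⊤ := by
      rw [LinearMap.range_eq_top]
      intro c
      refine ⟨EuclideanSpace.single i0 c, ?_⟩
      show EuclideanSpace.proj i0 (EuclideanSpace.single i0 c) = c
      simp
    have h2 := f.finrank_range_add_finrank_ker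
    rw [← hK] at h2
    rw [hsurj, finrank_top, Module.finrank_self, finrank_euclideanSpace_fin] at h2
    have h3 : Module.finrank ℝ K = d - 1 := by omega
    rw [h3]
end

section
/- Let d be a positive integer. There exists a compact set C ⊆ ℝ^d with Hausdorff dimension 0 that is not microscopic. -/
open Filter Set Topology MeasureTheory
open scoped ENNReal NNReal

noncomputable section
namespace Stmt16Aux

/-- weight of digit `t` -/
def w (t : ℕ) : ℝ := (8 : ℝ)⁻¹ ^ (2 ^ t)

lemma c_pos : (0:ℝ) < (8:ℝ)⁻¹ := by norm_num
lemma c_lt_one : (8:ℝ)⁻¹ < (1:ℝ) := by norm_num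

lemma w_pos (t : ℕ) : 0 < w t := pow_pos c_pos _

lemma w_le_geom (t : ℕ) : w t ≤ (8:ℝ)⁻¹ ^ t :=
  pow_le_pow_of_le_one (by norm_num) (by norm_num) (Nat.le_of_lt (Nat.lt_two_pow_self (n := t)))

lemma w_antitone {s t : ℕ} (h : s ≤ t) : w t ≤ w s :=
  pow_le_pow_of_le_one (by norm_num) (by norm_num) (Nat.pow_le_pow_right (by norm_num) h)

lemma w_le_one (t : ℕ) : w t ≤ 1 :=
  pow_le_one₀ (by norm_num) (by norm_num)

lemma w_succ (t : ℕ) : w (t + 1) = (w t) ^ 2 := by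
  rw [w, w, ← pow_mul, pow_succ, mul_comm (2^t) 2, mul_comm]

lemma summable_geom : Summable (fun t : ℕ => (8:ℝ)⁻¹ ^ t) :=
  summable_geometric_of_lt_one (by norm_num) (by norm_num)

lemma summable_w : Summable w :=
  Summable.of_nonneg_of_le (fun t => (w_pos t).le) w_le_geom summable_geom

lemma summable_of_bound (g : ℕ → ℝ) (hg : ∀ t, |g t| ≤ 3 * w t) : Summable g := by
  have : Summable (fun t => 3 * w t) := summable_w.mul_left 3
  exact Summable.of_norm_bounded this (fun t => hg t)

/-- tail sum bound : `∑_{i} 3 w (i+m) ≤ 4 w m` -/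
lemma tail_sum (m : ℕ) : ∑' i : ℕ, 3 * w (i + m) ≤ 4 * w m := by
  have hsum : Summable (fun i : ℕ => 3 * w (i + m)) :=
    ((summable_w.mul_left 3).comp_injective (add_left_injective m))
  have hb : ∀ i : ℕ, 3 * w (i + m) ≤ 3 * w m * (8:ℝ)⁻¹ ^ i := by
    intro i
    have h2 : 2 ^ m + i ≤ 2 ^ (i + m) := by
      have : (i + 1) * 2 ^ m ≤ 2 ^ i * 2 ^ m :=
        Nat.mul_le_mul_right _ (Nat.lt_two_pow_self (n := i))
      calc 2 ^ m + i ≤ 2 ^ m + i * 2 ^ m := by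
            have : i ≤ i * 2 ^ m := Nat.le_mul_of_pos_right i (Nat.pow_pos (by norm_num))
            omega
        _ = (i + 1) * 2 ^ m := by ring
        _ ≤ 2 ^ i * 2 ^ m := this
        _ = 2 ^ (i + m) := (pow_add 2 i m).symm
    have : w (i + m) ≤ w m * (8:ℝ)⁻¹ ^ i := by
      rw [w, w, ← pow_add]
      exact pow_le_pow_of_le_one (by norm_num) (by norm_num) (by omega)
    nlinarith [this]
  calc ∑' i : ℕ, 3 * w (i + m) ≤ ∑' i : ℕ, 3 * w m * (8:ℝ)⁻¹ ^ i := by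
        refine Summable.tsum_le_tsum hb hsum ?_
        exact (summable_geom.mul_left _)
    _ = 3 * w m * (1 - (8:ℝ)⁻¹)⁻¹ := by
        rw [tsum_mul_left, tsum_geometric_of_lt_one (by norm_num) (by norm_num)]
    _ ≤ 4 * w m := by
        have := w_pos m
        rw [show (1 - (8:ℝ)⁻¹)⁻¹ = 8/7 by norm_num]
        nlinarith

/-- If `g` vanishes below `m` and `|g| ≤ 3 w`, then `|∑' g| ≤ 4 w m`. -/
lemma tsum_tail_bound (g : ℕ → ℝ) (hg : ∀ t, |g t| ≤ 3 * w t) (m : ℕ)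
    (h0 : ∀ t < m, g t = 0) : |∑' t, g t| ≤ 4 * w m := by
  have hs := summable_of_bound g hg
  have h1 : ∑ i ∈ Finset.range m, g i + ∑' i : ℕ, g (i + m) = ∑' t, g t :=
    Summable.sum_add_tsum_nat_add m hs
  have hz : ∑ i ∈ Finset.range m, g i = 0 :=
    Finset.sum_eq_zero (fun i hi => h0 i (Finset.mem_range.mp hi))
  have heq : ∑' t, g t = ∑' i : ℕ, g (i + m) := by rw [← h1, hz, zero_add]
  rw [heq]
  have hs' : Summable (fun i : ℕ => g (i + m)) := hs.comp_injective (add_left_injective m)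
  have hb : Summable (fun i : ℕ => ‖g (i + m)‖) := by simpa using hs'.abs
  have h2 := norm_tsum_le_tsum_norm hb
  simp only [Real.norm_eq_abs] at h2
  calc |∑' i : ℕ, g (i + m)| ≤ ∑' i : ℕ, |g (i + m)| := h2
    _ ≤ ∑' i : ℕ, 3 * w (i + m) := Summable.tsum_le_tsum (fun i => hg _) hs'.abs
        (((summable_w.mul_left 3).comp_injective (add_left_injective m)))
    _ ≤ 4 * w m := tail_sum m

/-- the point of the Cantor set indexed by a digit sequence -/
def x (a : ℕ → Fin 4) : ℝ := ∑' t, (a t : ℝ) * w t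

lemma digit_abs_bound (a b : ℕ → Fin 4) (t : ℕ) :
    |((a t : ℝ) - (b t : ℝ)) * w t| ≤ 3 * w t := by
  rw [abs_mul, abs_of_pos (w_pos t)]
  have h1 : ((a t : ℕ) : ℝ) ≤ 3 := by exact_mod_cast Nat.le_of_lt_succ (a t).isLt
  have h2 : ((b t : ℕ) : ℝ) ≤ 3 := by exact_mod_cast Nat.le_of_lt_succ (b t).isLt
  have h3 : (0:ℝ) ≤ (a t : ℕ) := Nat.cast_nonneg _
  have h4 : (0:ℝ) ≤ (b t : ℕ) := Nat.cast_nonneg _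
  have : |((a t : ℝ) - (b t : ℝ))| ≤ 3 := by
    rw [abs_sub_le_iff]; constructor <;> push_cast <;> linarith
  nlinarith [w_pos t]

lemma summable_x (a : ℕ → Fin 4) : Summable (fun t => (a t : ℝ) * w t) := by
  refine summable_of_bound _ (fun t => ?_)
  have := digit_abs_bound a (fun _ => 0) t
  simpa using this

lemma x_sub (a b : ℕ → Fin 4) :
    x a - x b = ∑' t, ((a t : ℝ) - (b t : ℝ)) * w t := by
  rw [x, x, ← Summable.tsum_sub (summable_x a) (summable_x b)]
  congr 1; funext t; ring

/-- If two digit sequences agree below `m`, the points are within `4 w m`. -/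
lemma x_tail (a b : ℕ → Fin 4) (m : ℕ) (h : ∀ t < m, a t = b t) :
    |x a - x b| ≤ 4 * w m := by
  rw [x_sub]
  exact tsum_tail_bound _ (digit_abs_bound a b) m
    (fun t ht => by rw [h t ht]; ring)

/-- If the first disagreement of two digit sequences is at `t`, the points are
at distance at least `w t / 2`. -/
lemma x_sep (a b : ℕ → Fin 4) (t : ℕ) (h : ∀ u < t, a u = b u) (hne : a t ≠ b t) :
    w t / 2 ≤ |x a - x b| := by
  set g : ℕ → ℝ := fun u => ((a u : ℝ) - (b u : ℝ)) * w u with hg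
  have hsg : Summable g := summable_of_bound g (digit_abs_bound a b)
  have h1 : ∑ i ∈ Finset.range (t+1), g i + ∑' i : ℕ, g (i + (t+1)) = ∑' u, g u :=
    Summable.sum_add_tsum_nat_add (t+1) hsg
  have hz : ∑ i ∈ Finset.range (t+1), g i = g t := by
    rw [Finset.sum_range_succ]
    have : ∑ i ∈ Finset.range t, g i = 0 :=
      Finset.sum_eq_zero (fun i hi => by
        simp only [hg]; rw [h i (Finset.mem_range.mp hi)]; ring)
    rw [this, zero_add]
  -- bound the tail
  have hs' : Summable (fun i : ℕ => g (i + (t+1))) :=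
    hsg.comp_injective (add_left_injective (t+1))
  have hb : Summable (fun i : ℕ => ‖g (i + (t+1))‖) := by simpa using hs'.abs
  have htail : |∑' i : ℕ, g (i + (t+1))| ≤ 4 * w (t+1) := by
    have h2 := norm_tsum_le_tsum_norm hb
    simp only [Real.norm_eq_abs] at h2
    calc |∑' i : ℕ, g (i + (t+1))| ≤ ∑' i : ℕ, |g (i + (t+1))| := h2
      _ ≤ ∑' i : ℕ, 3 * w (i + (t+1)) := Summable.tsum_le_tsum (fun i => digit_abs_bound a b _) hs'.abs
          (((summable_w.mul_left 3).comp_injective (add_left_injective (t+1))))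
      _ ≤ 4 * w (t+1) := tail_sum (t+1)
  -- bound the main term from below
  have hmain : w t ≤ |g t| := by
    have hne' : ((a t : ℕ) : ℤ) ≠ ((b t : ℕ) : ℤ) := by
      intro hc
      exact hne (Fin.ext (by exact_mod_cast hc))
    have : (1:ℝ) ≤ |((a t : ℝ) - (b t : ℝ))| := by
      have h5 : (1:ℤ) ≤ |((a t : ℕ) : ℤ) - ((b t : ℕ) : ℤ)| :=
        Int.one_le_abs (sub_ne_zero.mpr hne')
      have h6 : ((|((a t : ℕ) : ℤ) - ((b t : ℕ) : ℤ)| : ℤ) : ℝ) = |((a t : ℝ) - (b t : ℝ))| := by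
        push_cast [Int.cast_abs]
        norm_num
      rw [← h6]; exact_mod_cast h5
    rw [hg, abs_mul, abs_of_pos (w_pos t)]
    nlinarith [w_pos t]
  have hw2 : 4 * w (t+1) ≤ w t / 2 := by
    rw [w_succ]
    have h8 : w t ≤ (8:ℝ)⁻¹ := by
      have := w_antitone (Nat.zero_le t); simpa [w] using this
    nlinarith [w_pos t]
  have hxs : x a - x b = g t + ∑' i : ℕ, g (i + (t+1)) := by
    rw [x_sub, ← h1, hz]
  rw [hxs]
  calc w t / 2 = w t - w t / 2 := by ring
    _ ≤ |g t| - |∑' i : ℕ, g (i + (t+1))| := by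
        have := hw2; linarith [hmain, htail]
    _ ≤ |g t + ∑' i : ℕ, g (i + (t+1))| := by
        have := abs_add_le (g t + ∑' i : ℕ, g (i + (t+1))) (-(∑' i : ℕ, g (i + (t+1))))
        simp only [add_neg_cancel_right, abs_neg] at this
        linarith

/-- Separation in the form used later: if two digit sequences differ somewhere
at or below `j`, the points are at least `w j / 2` apart. -/
lemma x_sep' (a b : ℕ → Fin 4) (j : ℕ) (h : ∃ t ≤ j, a t ≠ b t) :
    w j / 2 ≤ |x a - x b| := by
  classical
  have hex : ∃ t, t ≤ j ∧ a t ≠ b t := by obtain ⟨t, ht, hne⟩ := h; exact ⟨t, ht, hne⟩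
  set t0 := Nat.find hex with ht0
  obtain ⟨ht0j, ht0ne⟩ := Nat.find_spec hex
  have hmin : ∀ u < t0, a u = b u := by
    intro u hu
    by_contra hc
    exact Nat.find_min hex hu ⟨le_trans hu.le ht0j, hc⟩
  have := x_sep a b t0 hmin ht0ne
  have hw : w j ≤ w t0 := w_antitone ht0j
  linarith

/-! ### continuity of `x` -/

lemma continuous_x : Continuous (x : (ℕ → Fin 4) → ℝ) := by
  refine continuous_tsum (u := fun t => 3 * w t) (fun t => ?_) (summable_w.mul_left 3) ?_
  · exact ((continuous_of_discreteTopology (f := fun v : Fin 4 => ((v : ℕ) : ℝ))).comp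
      (continuous_apply t)).mul continuous_const
  · intro t a
    have := digit_abs_bound a (fun _ => 0) t
    simp only [Real.norm_eq_abs]
    simpa using this

section Dim
variable {d : ℕ}

/-- the map from digit arrays to `ℝ^d` -/
def X (A : Fin d → ℕ → Fin 4) : EuclideanSpace ℝ (Fin d) := WithLp.toLp 2 (fun i => x (A i))

lemma X_apply (A : Fin d → ℕ → Fin 4) (i : Fin d) : X A i = x (A i) := rfl

lemma continuous_X : Continuous (X : (Fin d → ℕ → Fin 4) → EuclideanSpace ℝ (Fin d)) := by
  have h : Continuous ((WithLp.equiv 2 (Fin d → ℝ)).symm ∘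
      (fun A : Fin d → ℕ → Fin 4 => fun i => x (A i))) := by
    refine (PiLp.continuous_toLp 2 (fun _ : Fin d => ℝ)).comp ?_
    exact continuous_pi (fun i => continuous_x.comp (continuous_apply i))
  exact h

/-- The Cantor-type compact set in `ℝ^d`. -/
def CSet (d : ℕ) : Set (EuclideanSpace ℝ (Fin d)) := Set.range (X (d := d))

lemma isCompact_CSet : IsCompact (CSet d) := isCompact_range continuous_X

/-! ### growth lemmas -/

lemma two_mul_add_one_le (n : ℕ) (hn : 3 ≤ n) : 2*n+1 ≤ 2^n := by
  induction n, hn using Nat.le_induction with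
  | base => norm_num
  | succ m hm ih =>
    have h1 : (2:ℕ) ≤ 2^m :=
      le_trans (by norm_num) (Nat.pow_le_pow_right (by norm_num) (by omega : 1 ≤ m))
    calc 2*(m+1)+1 = (2*m+1) + 2 := by ring
      _ ≤ 2^m + 2^m := Nat.add_le_add ih h1
      _ = 2^(m+1) := by rw [pow_succ]; ring

lemma sq_le_two_pow (n : ℕ) (hn : 4 ≤ n) : n^2 ≤ 2^n := by
  induction n, hn using Nat.le_induction with
  | base => norm_num
  | succ m hm ih =>
    have h2 := two_mul_add_one_le m (by omega)
    calc (m+1)^2 = m^2 + (2*m+1) := by ring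
      _ ≤ 2^m + 2^m := Nat.add_le_add ih h2
      _ = 2^(m+1) := by rw [pow_succ]; ring

lemma mul_le_two_pow {M n : ℕ} (hM : M ≤ n) (h4 : 4 ≤ n) : M * n ≤ 2^n :=
  le_trans (Nat.mul_le_mul_right n hM) (by rw [← pow_two]; exact sq_le_two_pow n h4)

/-! ### the cells and Hausdorff dimension zero -/


/-- the cell of all points whose digits start with the prefix array `q` -/
def cell (k : ℕ) (q : Fin d → (Fin (k+1) → Fin 4)) : Set (EuclideanSpace ℝ (Fin d)) :=
  X '' {A | ∀ (i : Fin d) (t : Fin (k+1)), A i (t : ℕ) = q i t}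

lemma CSet_subset_iUnion_cell (k : ℕ) : CSet d ⊆ ⋃ q, cell k q := by
  rintro _ ⟨A, rfl⟩
  exact Set.mem_iUnion.mpr ⟨fun i t => A i (t : ℕ), ⟨A, fun i t => rfl, rfl⟩⟩

lemma dist_le_of_coord_le {y z : EuclideanSpace ℝ (Fin d)} {τ : ℝ} (hτ : 0 ≤ τ)
    (h : ∀ i, |y i - z i| ≤ τ) : dist y z ≤ (d : ℝ) * τ := by
  have h1 : dist y z ≤ Real.sqrt ((d : ℝ) * τ^2) := by
    rw [EuclideanSpace.dist_eq]
    apply Real.sqrt_le_sqrt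
    calc ∑ i, dist (y i) (z i) ^ 2 ≤ ∑ _i : Fin d, τ^2 := by
          refine Finset.sum_le_sum (fun i _ => ?_)
          have := h i
          rw [Real.dist_eq]
          nlinarith [abs_nonneg (y i - z i), abs_sub_abs_le_abs_sub (y i - z i) 0]
      _ = (d : ℝ) * τ^2 := by simp [Finset.sum_const, nsmul_eq_mul]
  refine h1.trans ?_
  rw [Real.sqrt_mul (by positivity), Real.sqrt_sq hτ]
  have : Real.sqrt (d : ℝ) ≤ (d : ℝ) := by
    rcases Nat.eq_zero_or_pos d with h0 | h0
    · simp [h0]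
    · have hd1 : (1:ℝ) ≤ (d:ℝ) := by exact_mod_cast h0
      calc Real.sqrt (d:ℝ) ≤ Real.sqrt ((d:ℝ)^2) := Real.sqrt_le_sqrt (by nlinarith)
        _ = (d:ℝ) := Real.sqrt_sq (by positivity)
  nlinarith [Real.sqrt_nonneg (d:ℝ)]

lemma diam_cell_le (k : ℕ) (q : Fin d → (Fin (k+1) → Fin 4)) :
    EMetric.diam (cell k q) ≤ ENNReal.ofReal ((d : ℝ) * (4 * w (k+1))) := by
  refine EMetric.diam_le ?_
  rintro _ ⟨A, hA, rfl⟩ _ ⟨B, hB, rfl⟩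
  rw [edist_dist]
  refine ENNReal.ofReal_le_ofReal ?_
  refine dist_le_of_coord_le (mul_nonneg (by norm_num) (w_pos _).le) (fun i => ?_)
  rw [X_apply, X_apply]
  refine x_tail (A i) (B i) (k+1) (fun t ht => ?_)
  rw [hA i ⟨t, ht⟩, hB i ⟨t, ht⟩]

lemma card_prefixes (k : ℕ) :
    Fintype.card (Fin d → (Fin (k+1) → Fin 4)) = (4^(k+1))^d := by
  rw [Fintype.card_fun, Fintype.card_fun]
  simp

/-- the real upper bound sequence for the Hausdorff sums tends to zero -/
lemma real_bound_tendsto (hd : 0 < d) {s : ℝ} (hs : 0 < s) :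
    Tendsto (fun k : ℕ => (((4^(k+1))^d : ℕ) : ℝ) * ((d:ℝ) * (4 * w (k+1))) ^ s)
      atTop (𝓝 0) := by
  set ρ : ℝ := ((8:ℝ)⁻¹) ^ s with hρ
  have hρ0 : 0 < ρ := Real.rpow_pos_of_pos c_pos s
  have hρ1 : ρ < 1 := Real.rpow_lt_one (by norm_num) (by norm_num) hs
  obtain ⟨M, hM⟩ : ∃ M : ℕ, ρ ^ M < ((4:ℝ)^d)⁻¹ :=
    exists_pow_lt_of_lt_one (by positivity) hρ1
  set Q : ℝ := (4:ℝ)^d * ρ^M with hQ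
  have hQ0 : 0 ≤ Q := by positivity
  have hQ1 : Q < 1 := by
    rw [hQ]
    have h4 : (0:ℝ) < (4:ℝ)^d := by positivity
    calc (4:ℝ)^d * ρ^M < (4:ℝ)^d * ((4:ℝ)^d)⁻¹ := by
          exact mul_lt_mul_of_pos_left hM h4
      _ = 1 := mul_inv_cancel₀ (ne_of_gt h4)
  have hwpow : ∀ k : ℕ, (w (k+1)) ^ s = ρ ^ (2^(k+1)) := by
    intro k
    rw [w, ← Real.rpow_natCast ((8:ℝ)⁻¹) (2^(k+1)), ← Real.rpow_mul (by norm_num),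
      mul_comm, Real.rpow_mul (by norm_num), Real.rpow_natCast]
  have hub : ∀ᶠ k : ℕ in atTop,
      (((4^(k+1))^d : ℕ) : ℝ) * ((d:ℝ) * (4 * w (k+1))) ^ s
        ≤ ((4:ℝ)*d) ^ s * Q ^ (k+1) := by
    filter_upwards [eventually_ge_atTop (M + 4)] with k hk
    have hmono : ρ ^ (2^(k+1)) ≤ (ρ^M)^(k+1) := by
      rw [← pow_mul]
      exact pow_le_pow_of_le_one hρ0.le hρ1.le (mul_le_two_pow (by omega) (by omega))
    have hsplit : ((d:ℝ) * (4 * w (k+1))) ^ s = ((4:ℝ)*d) ^ s * (w (k+1)) ^ s := by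
      rw [← Real.mul_rpow (by positivity) (w_pos _).le]
      ring_nf
    have hcast : (((4^(k+1))^d : ℕ) : ℝ) = ((4:ℝ)^d)^(k+1) := by
      push_cast
      rw [← pow_mul, ← pow_mul, mul_comm]
    rw [hsplit, hwpow k, hcast]
    calc ((4:ℝ)^d)^(k+1) * (((4:ℝ)*d) ^ s * ρ ^ (2^(k+1)))
        ≤ ((4:ℝ)^d)^(k+1) * (((4:ℝ)*d) ^ s * (ρ^M)^(k+1)) := by
          refine mul_le_mul_of_nonneg_left ?_ (by positivity)
          exact mul_le_mul_of_nonneg_left hmono (by positivity)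
      _ = ((4:ℝ)*d) ^ s * Q ^ (k+1) := by
          rw [hQ, mul_pow]; ring
  have hg : Tendsto (fun k : ℕ => ((4:ℝ)*d) ^ s * Q ^ (k+1)) atTop (𝓝 0) := by
    have h1 : Tendsto (fun n : ℕ => Q ^ n) atTop (𝓝 0) :=
      tendsto_pow_atTop_nhds_zero_of_lt_one hQ0 hQ1
    have h2 : Tendsto (fun k : ℕ => Q ^ (k+1)) atTop (𝓝 0) :=
      h1.comp (tendsto_add_atTop_nat 1)
    simpa using h2.const_mul (((4:ℝ)*d) ^ s)
  refine squeeze_zero' ?_ hub hg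
  filter_upwards with k
  have := (w_pos (k+1)).le
  positivity

/-- The set has Hausdorff dimension zero. -/
theorem dimH_CSet (hd : 0 < d) : dimH (CSet d) = 0 := by
  refine le_antisymm ?_ zero_le
  refine ENNReal.le_of_forall_pos_le_add (fun s hs _ => ?_)
  rw [zero_add]
  refine dimH_le_of_hausdorffMeasure_ne_top ?_
  have hzero : μH[(s:ℝ)] (CSet d) = 0 := by
    have hr : Tendsto (fun k : ℕ => ENNReal.ofReal ((d:ℝ) * (4 * w (k+1)))) atTop (𝓝 0) := by
      have hreal : Tendsto (fun k : ℕ => (d:ℝ) * (4 * w (k+1))) atTop (𝓝 0) := by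
        have h1 : Tendsto (fun k : ℕ => w (k+1)) atTop (𝓝 0) := by
          refine squeeze_zero (fun k => (w_pos _).le) (fun k => w_le_geom (k+1)) ?_
          exact (tendsto_pow_atTop_nhds_zero_of_lt_one (by norm_num) (by norm_num)).comp
            (tendsto_add_atTop_nat 1)
        simpa using (h1.const_mul 4).const_mul (d:ℝ)
      simpa using ENNReal.tendsto_ofReal hreal
    have hle := Measure.hausdorffMeasure_le_liminf_sum (s:ℝ) (CSet d)
      (fun k : ℕ => ENNReal.ofReal ((d:ℝ) * (4 * w (k+1)))) hr
      (fun k q => cell k q)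
      (Filter.Eventually.of_forall (fun k i => diam_cell_le k i))
      (Filter.Eventually.of_forall (fun k => CSet_subset_iUnion_cell k))
    refine le_antisymm ?_ zero_le
    refine hle.trans ?_
    have hbd : ∀ k : ℕ, (∑ q : Fin d → (Fin (k+1) → Fin 4),
        EMetric.diam (cell k q) ^ (s:ℝ))
        ≤ ENNReal.ofReal ((((4^(k+1))^d : ℕ) : ℝ) * ((d:ℝ) * (4 * w (k+1))) ^ (s:ℝ)) := by
      intro k
      have h1 : ∀ q : Fin d → (Fin (k+1) → Fin 4),
          EMetric.diam (cell k q) ^ (s:ℝ)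
            ≤ ENNReal.ofReal (((d:ℝ) * (4 * w (k+1))) ^ (s:ℝ)) := by
        intro q
        rw [← ENNReal.ofReal_rpow_of_nonneg
          (mul_nonneg (Nat.cast_nonneg d) (mul_nonneg (by norm_num) (w_pos _).le)) s.coe_nonneg]
        exact ENNReal.rpow_le_rpow (diam_cell_le k q) s.coe_nonneg
      calc (∑ q : Fin d → (Fin (k+1) → Fin 4), EMetric.diam (cell k q) ^ (s:ℝ))
          ≤ ∑ _q : Fin d → (Fin (k+1) → Fin 4),
              ENNReal.ofReal (((d:ℝ) * (4 * w (k+1))) ^ (s:ℝ)) :=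
            Finset.sum_le_sum (fun q _ => h1 q)
        _ = (Fintype.card (Fin d → (Fin (k+1) → Fin 4))) *
              ENNReal.ofReal (((d:ℝ) * (4 * w (k+1))) ^ (s:ℝ)) := by
            rw [Finset.sum_const, nsmul_eq_mul]; rfl
        _ = ENNReal.ofReal ((((4^(k+1))^d : ℕ) : ℝ) * ((d:ℝ) * (4 * w (k+1))) ^ (s:ℝ)) := by
            rw [card_prefixes, ENNReal.ofReal_mul (by positivity), ENNReal.ofReal_natCast]
    have htend : Tendsto (fun k : ℕ => ENNReal.ofReal
        ((((4^(k+1))^d : ℕ) : ℝ) * ((d:ℝ) * (4 * w (k+1))) ^ (s:ℝ))) atTop (𝓝 0) := by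
      have := real_bound_tendsto hd (s := (s:ℝ)) (by exact_mod_cast hs)
      simpa using ENNReal.tendsto_ofReal this
    calc liminf (fun k : ℕ => ∑ q : Fin d → (Fin (k+1) → Fin 4),
          EMetric.diam (cell k q) ^ (s:ℝ)) atTop
        ≤ liminf (fun k : ℕ => ENNReal.ofReal
            ((((4^(k+1))^d : ℕ) : ℝ) * ((d:ℝ) * (4 * w (k+1))) ^ (s:ℝ))) atTop :=
          Filter.liminf_le_liminf (Filter.Eventually.of_forall hbd)
      _ = 0 := htend.liminf_eq
  rw [hzero]
  exact ENNReal.zero_ne_top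

/-! ### the partial sum bound -/

lemma partial_sum_bound : ∀ N : ℕ, ∑ n ∈ Finset.range N, (((3*(n:ℝ)+2)^2)⁻¹) ≤ 13/36 := by
  have key : ∀ N : ℕ, ∑ n ∈ Finset.range (N+1), (((3*(n:ℝ)+2)^2)⁻¹)
      ≤ 13/36 - (9*((N:ℝ)+1))⁻¹ := by
    intro N
    induction N with
    | zero => norm_num
    | succ m ih =>
      rw [Finset.sum_range_succ]
      have hm0 : (0:ℝ) ≤ (m:ℝ) := Nat.cast_nonneg m
      have hdiff : (9*((m:ℝ)+1))⁻¹ - (9*((m:ℝ)+2))⁻¹ = (9*(((m:ℝ)+1)*((m:ℝ)+2)))⁻¹ := by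
        rw [inv_sub_inv (by positivity) (by positivity)]
        rw [show 9*((m:ℝ)+2) - 9*((m:ℝ)+1) = 9 by ring]
        rw [div_eq_inv_mul]
        rw [show 9*((m:ℝ)+1)*(9*((m:ℝ)+2)) = 9*(9*(((m:ℝ)+1)*((m:ℝ)+2))) by ring]
        rw [mul_inv]
        field_simp
      have hstep : (((3*((m:ℝ)+1)+2)^2)⁻¹ : ℝ) ≤ (9*((m:ℝ)+1))⁻¹ - (9*((m:ℝ)+2))⁻¹ := by
        rw [hdiff]
        refine inv_anti₀ (by positivity) (by nlinarith)
      have hfix : ((9:ℝ)*((m:ℝ)+1+1))⁻¹ = (9*((m:ℝ)+2))⁻¹ := by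
        rw [show (m:ℝ)+1+1 = (m:ℝ)+2 from by ring]
      push_cast
      push_cast at ih
      rw [hfix]
      linarith [hstep, ih]
  intro N
  rcases N with _ | M
  · norm_num
  · refine (key M).trans ?_
    have : (0:ℝ) < 9*((M:ℝ)+1) := by positivity
    have := inv_pos.mpr this
    linarith

/-- The Cantor-type set is not microscopic. -/
theorem not_microscopic (hd : 0 < d) : ¬ Microscopic (CSet d) := by
  classical
  intro hmic
  set ε : ℝ := (8:ℝ)⁻¹ ^ (3*d) with hε
  obtain ⟨B, hbox, hcov, hvol⟩ := hmic ε (by positivity)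
  choose av bv hB using hbox
  set r : ℕ → ℝ := fun n => (8:ℝ)⁻¹ ^ (3*(n+1)) with hr
  have hrpos : ∀ n, 0 < r n := fun n => by positivity
  -- each box has a small side
  have hsmall : ∀ n, ∃ i₀ : Fin d, bv n i₀ - av n i₀ ≤ r n := by
    intro n
    by_contra hcon
    push_neg at hcon
    have hvoln : volume (B n) = ∏ i, ENNReal.ofReal (bv n i - av n i) := by
      rw [hB n]
      have hset : {x : EuclideanSpace ℝ (Fin d) | ∀ i, x i ∈ Icc (av n i) (bv n i)}
          = (MeasurableEquiv.toLp 2 (Fin d → ℝ)).symm ⁻¹'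
            (Set.univ.pi fun i => Icc (av n i) (bv n i)) := by
        ext x
        simp only [mem_preimage, Set.mem_univ_pi, mem_setOf_eq]
        rfl
      rw [hset, (EuclideanSpace.volume_preserving_symm_measurableEquiv_toLp (Fin d)).measure_preimage
        ((MeasurableSet.univ_pi (fun i => measurableSet_Icc)).nullMeasurableSet), volume_pi_pi]
      simp [Real.volume_Icc]
    have hprodle : ∏ i, (bv n i - av n i) ≤ ε ^ (n+1) := by
      have h1 : ENNReal.ofReal (∏ i, (bv n i - av n i)) ≤ ENNReal.ofReal (ε ^ (n+1)) := by
        rw [ENNReal.ofReal_prod_of_nonneg (fun i _ => by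
          have := hcon i; have := hrpos n; linarith)]
        rw [← hvoln]
        exact hvol n
      exact (ENNReal.ofReal_le_ofReal_iff (by positivity)).mp h1
    have hεr : ε ^ (n+1) = (r n) ^ d := by
      have h1 : r n = (8:ℝ)⁻¹ ^ (3*(n+1)) := rfl
      rw [hε, h1, ← pow_mul, ← pow_mul]
      ring_nf
    have hstrict : (r n) ^ d < ∏ i, (bv n i - av n i) := by
      have hne : (Finset.univ : Finset (Fin d)).Nonempty := ⟨⟨0, hd⟩, Finset.mem_univ _⟩
      calc (r n) ^ d = ∏ _i : Fin d, r n := by rw [Finset.prod_const, Finset.card_univ]; simp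
        _ < ∏ i, (bv n i - av n i) :=
          Finset.prod_lt_prod_of_nonempty (fun i _ => hrpos n) (fun i _ => hcon i) hne
    rw [hεr] at hprodle
    linarith
  choose i₀ hi₀ using hsmall
  -- enlarged open boxes
  set U : ℕ → Set (EuclideanSpace ℝ (Fin d)) :=
    fun n => {y | ∀ i, y i ∈ Ioo (av n i - r n) (bv n i + r n)} with hU
  have hBU : ∀ n, B n ⊆ U n := by
    intro n x hx
    rw [hB n] at hx
    intro i
    have := hx i
    exact ⟨by linarith [this.1, hrpos n], by linarith [this.2, hrpos n]⟩
  have hUopen : ∀ n, IsOpen (U n) := by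
    intro n
    have : U n = ⋂ i, (fun y : EuclideanSpace ℝ (Fin d) => y i) ⁻¹'
        (Ioo (av n i - r n) (bv n i + r n)) := by
      ext y; simp [hU, Set.mem_iInter]
    rw [this]
    exact isOpen_iInter_of_finite (fun i =>
      (isOpen_Ioo).preimage ((continuous_apply i).comp
        (PiLp.continuous_ofLp 2 (fun _ : Fin d => ℝ))))
  have hCU : CSet d ⊆ ⋃ n, U n :=
    hcov.trans (Set.iUnion_mono hBU)
  obtain ⟨F, hF⟩ := isCompact_CSet.elim_finite_subcover U hUopen hCU
  -- choose levels
  set j : ℕ → ℕ := fun n => Nat.log 2 (3*n+2) with hj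
  set k : ℕ := F.sup j with hk
  have hjk : ∀ n ∈ F, j n ≤ k := fun n hn => Finset.le_sup hn
  -- prefix tuples and chosen points
  set ext : (Fin (k+1) → Fin 4) → (ℕ → Fin 4) :=
    fun q t => if h : t < k+1 then q ⟨t, h⟩ else 0 with hext
  set Ap : (Fin d → (Fin (k+1) → Fin 4)) → (Fin d → ℕ → Fin 4) :=
    fun p i => ext (p i) with hAp
  have hyU : ∀ p : Fin d → (Fin (k+1) → Fin 4), ∃ n ∈ F, X (Ap p) ∈ U n := by
    intro p
    have : X (Ap p) ∈ CSet d := ⟨Ap p, rfl⟩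
    have := hF this
    simpa using this
  choose Φ hΦF hΦU using hyU
  -- separation claim: fibers have constant low prefixes in coordinate i₀
  have claim : ∀ n, ∀ p q : Fin d → (Fin (k+1) → Fin 4), Φ p = n → Φ q = n →
      ∀ t : Fin (k+1), (t : ℕ) ≤ j n → p (i₀ n) t = q (i₀ n) t := by
    intro n p q hp hq t htj
    by_contra hne
    have hsep : w (j n) / 2 ≤ |x (Ap p (i₀ n)) - x (Ap q (i₀ n))| := by
      refine x_sep' _ _ (j n) ⟨(t : ℕ), htj, ?_⟩
      have h1 : Ap p (i₀ n) (t : ℕ) = p (i₀ n) t := by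
        simp only [hAp, hext, dif_pos t.isLt, Fin.eta]
      have h2 : Ap q (i₀ n) (t : ℕ) = q (i₀ n) t := by
        simp only [hAp, hext, dif_pos t.isLt, Fin.eta]
      rw [h1, h2]
      exact hne
    have hyp := hΦU p; rw [hp] at hyp
    have hyq := hΦU q; rw [hq] at hyq
    have hp1 := hyp (i₀ n)
    have hq1 := hyq (i₀ n)
    have hdist : |x (Ap p (i₀ n)) - x (Ap q (i₀ n))| < 3 * r n := by
      have hxp : X (Ap p) (i₀ n) = x (Ap p (i₀ n)) := rfl
      have hxq : X (Ap q) (i₀ n) = x (Ap q (i₀ n)) := rfl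
      rw [hxp] at hp1; rw [hxq] at hq1
      have hside := hi₀ n
      rw [abs_lt]
      constructor
      · linarith [hp1.1, hp1.2, hq1.1, hq1.2]
      · linarith [hp1.1, hp1.2, hq1.1, hq1.2]
    -- but w (j n) / 2 ≥ 4 * r n
    have hwlarge : 4 * r n ≤ w (j n) / 2 := by
      have h2j : 2 ^ (j n) ≤ 3*n+2 := Nat.pow_log_le_self 2 (by omega)
      have hw1 : (8:ℝ)⁻¹ ^ (3*n+2) ≤ w (j n) := by
        rw [w]
        exact pow_le_pow_of_le_one (by norm_num) (by norm_num) h2j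
      have hw2 : (8:ℝ)⁻¹ ^ (3*n+2) = 8 * r n := by
        have hrn : r n = (8:ℝ)⁻¹ ^ (3*n+2) * 8⁻¹ := by
          show (8:ℝ)⁻¹ ^ (3*(n+1)) = _
          rw [show 3*(n+1) = (3*n+2)+1 from by ring, pow_succ]
        rw [hrn]
        ring
      rw [hw2] at hw1
      linarith
    linarith [hrpos n]
  -- counting
  have hfib : ∀ n, (Finset.univ.filter (fun p : Fin d → (Fin (k+1) → Fin 4) => Φ p = n)).card * 4^(j n + 1)
      ≤ (4^(k+1))^d := by
    intro n
    by_cases hnF : n ∈ F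
    swap
    · have : (Finset.univ.filter (fun p : Fin d → (Fin (k+1) → Fin 4) => Φ p = n)) = ∅ := by
        refine Finset.filter_eq_empty_iff.mpr ?_
        intro p _
        intro hc
        exact hnF (hc ▸ hΦF p)
      rw [this]
      simp
    have hjn : j n + 1 ≤ k + 1 := by
      have := hjk n hnF; omega
    set g : ((Fin d → (Fin (k+1) → Fin 4)) × (Fin (j n + 1) → Fin 4))
        → (Fin d → (Fin (k+1) → Fin 4)) := fun pu =>
      fun i t => if h : i = i₀ n ∧ (t : ℕ) < j n + 1 then pu.2 ⟨(t : ℕ), h.2⟩ else pu.1 i t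
      with hg
    have hgval : ∀ (p : Fin d → (Fin (k+1) → Fin 4)) (u : Fin (j n + 1) → Fin 4)
        (t : Fin (j n + 1))
        (ht1 : (t : ℕ) < k + 1), g (p, u) (i₀ n) ⟨(t : ℕ), ht1⟩ = u t := by
      intro p u t ht1
      rw [hg]
      simp only
      split
      · exact congrArg u (Fin.ext rfl)
      · next h => exact absurd ⟨by simp, by simpa using t.isLt⟩ h
    have hinj : Set.InjOn g ↑((Finset.univ.filter (fun p : Fin d → (Fin (k+1) → Fin 4) => Φ p = n)) ×ˢ
        (Finset.univ : Finset (Fin (j n + 1) → Fin 4))) := by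
      rintro ⟨p, u⟩ hpu ⟨p', u'⟩ hpu' heq
      simp only [Finset.mem_coe, Finset.mem_product, Finset.mem_filter,
        Finset.mem_univ, true_and] at hpu hpu'
      have hΦp : Φ p = n := hpu.1
      have hΦp' : Φ p' = n := hpu'.1
      have hu : u = u' := by
        funext t
        have ht1 : (t : ℕ) < k + 1 := lt_of_lt_of_le t.isLt hjn
        have hval := congrFun (congrFun heq (i₀ n)) ⟨(t : ℕ), ht1⟩
        rw [hgval p u t ht1, hgval p' u' t ht1] at hval
        exact hval
      have hp : p = p' := by
        funext i t
        by_cases hc : i = i₀ n ∧ (t : ℕ) < j n + 1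
        · rcases hc with ⟨hci, hct⟩
          subst hci
          exact claim n p p' hΦp hΦp' t (by omega)
        · have hval := congrFun (congrFun heq i) t
          rw [hg] at hval
          simp only at hval
          rw [dif_neg hc, dif_neg hc] at hval
          exact hval
      rw [hp, hu]
    have hcard := Finset.card_le_card_of_injOn g
      (fun _ _ => Finset.mem_univ _) hinj
    rw [Finset.card_product] at hcard
    have hu4 : (Finset.univ : Finset (Fin (j n + 1) → Fin 4)).card = 4^(j n + 1) := by
      rw [Finset.card_univ, Fintype.card_fun]
      simp [Fintype.card_fin]
    have huP : (Finset.univ : Finset (Fin d → (Fin (k+1) → Fin 4))).card = (4^(k+1))^d := by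
      rw [Finset.card_univ]
      exact card_prefixes k
    rw [hu4, huP] at hcard
    exact hcard
  -- summation over the finite cover
  have hsumcard : (Finset.univ : Finset (Fin d → (Fin (k+1) → Fin 4))).card
      = ∑ n ∈ F, (Finset.univ.filter (fun p : Fin d → (Fin (k+1) → Fin 4) => Φ p = n)).card :=
    Finset.card_eq_sum_card_fiberwise (fun p _ => hΦF p)
  set T : ℝ := ((4:ℝ)^(k+1))^d with hT
  have hT0 : 0 < T := by positivity
  have hTcast : ((((4:ℕ)^(k+1))^d : ℕ) : ℝ) = T := by
    rw [hT]; push_cast; ring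
  have hPcard : (Finset.univ : Finset (Fin d → (Fin (k+1) → Fin 4))).card = (4^(k+1))^d := by
    rw [Finset.card_univ]; exact card_prefixes k
  have h2n : ((4:ℕ)^(k+1))^d = ∑ n ∈ F,
      (Finset.univ.filter (fun p : Fin d → (Fin (k+1) → Fin 4) => Φ p = n)).card := by
    rw [← hPcard]; exact hsumcard
  have hone : 1 ≤ ∑ n ∈ F, ((4:ℝ)⁻¹)^(j n + 1) := by
    have h1 : T ≤ ∑ n ∈ F, T * ((4:ℝ)⁻¹)^(j n + 1) := by
      have h2 : T = ∑ n ∈ F, ((Finset.univ.filter (fun p : Fin d → (Fin (k+1) → Fin 4) => Φ p = n)).card : ℝ) := by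
        rw [← hTcast]
        exact_mod_cast h2n
      calc T = ∑ n ∈ F, ((Finset.univ.filter
            (fun p : Fin d → (Fin (k+1) → Fin 4) => Φ p = n)).card : ℝ) := h2
        _ ≤ ∑ n ∈ F, T * ((4:ℝ)⁻¹)^(j n + 1) := ?_
      refine Finset.sum_le_sum (fun n hn => ?_)
      have h3 := hfib n
      have h4 : (((Finset.univ.filter (fun p : Fin d → (Fin (k+1) → Fin 4) => Φ p = n)).card : ℝ)) * (4:ℝ)^(j n + 1)
          ≤ T := by
        rw [← hTcast]
        exact_mod_cast h3
      have h5 : (0:ℝ) < (4:ℝ)^(j n + 1) := by positivity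
      have h6 : ((Finset.univ.filter (fun p : Fin d → (Fin (k+1) → Fin 4) => Φ p = n)).card : ℝ)
          ≤ T / (4:ℝ)^(j n + 1) := (le_div_iff₀ h5).mpr h4
      refine h6.trans (le_of_eq ?_)
      rw [div_eq_mul_inv, inv_pow]
    have h7 : T * 1 ≤ T * ∑ n ∈ F, ((4:ℝ)⁻¹)^(j n + 1) := by
      rw [mul_one, Finset.mul_sum]
      exact h1
    exact le_of_mul_le_mul_left h7 hT0
  -- compare with the convergent series
  have hterm : ∀ n : ℕ, ((4:ℝ)⁻¹)^(j n + 1) ≤ ((3*(n:ℝ)+2)^2)⁻¹ := by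
    intro n
    have hnat : (3*n+2)^2 ≤ 4^(j n + 1) := by
      have h1 : 3*n+2 < 2^(j n + 1) := by
        have := Nat.lt_pow_succ_log_self (b := 2) (by norm_num) (3*n+2)
        simpa [hj] using this
      calc (3*n+2)^2 ≤ (2^(j n + 1))^2 := Nat.pow_le_pow_left (le_of_lt h1) 2
        _ = 4^(j n + 1) := by
          rw [show (4:ℕ) = 2^2 from rfl, ← pow_mul, ← pow_mul, Nat.mul_comm]
    have hcast : ((3*(n:ℝ)+2)^2) ≤ (4:ℝ)^(j n + 1) := by
      have := (Nat.cast_le (α := ℝ)).mpr hnat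
      push_cast at this
      convert this using 2 <;> push_cast <;> ring
    rw [inv_pow]
    exact inv_anti₀ (by positivity) hcast
  set N : ℕ := F.sup id + 1 with hN
  have hFN : F ⊆ Finset.range N := by
    intro n hn
    rw [Finset.mem_range, hN]
    exact Nat.lt_succ_of_le (Finset.le_sup (f := id) hn)
  have hfinal : (1:ℝ) ≤ 13/36 := by
    calc (1:ℝ) ≤ ∑ n ∈ F, ((4:ℝ)⁻¹)^(j n + 1) := hone
      _ ≤ ∑ n ∈ F, ((3*(n:ℝ)+2)^2)⁻¹ := Finset.sum_le_sum (fun n _ => hterm n)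
      _ ≤ ∑ n ∈ Finset.range N, ((3*(n:ℝ)+2)^2)⁻¹ :=
          Finset.sum_le_sum_of_subset_of_nonneg hFN (fun n _ _ => by positivity)
      _ ≤ 13/36 := partial_sum_bound N
  norm_num at hfinal

end Dim

end Stmt16Aux

end

theorem stmt16 (d : ℕ) (hd : 0 < d) :
    ∃ C : Set (EuclideanSpace ℝ (Fin d)),
      IsCompact C ∧ dimH C = 0 ∧ ¬ Microscopic C :=
  ⟨Stmt16Aux.CSet d, Stmt16Aux.isCompact_CSet, Stmt16Aux.dimH_CSet hd,
    Stmt16Aux.not_microscopic hd⟩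
end

section
/- Define the gauge ζ by ζ(r) = 1/|ln r| for 0 < r ≤ 1/e and ζ(r) = 1 for r > 1/e (and ζ(0)=0). If E ⊆ ℝ satisfies H^ζ(E) = 0, then E is microscopic. -/
open Filter Set Topology MeasureTheory
open scoped ENNReal NNReal

lemma rank_exists (a : ℕ → ℝ≥0∞) (hsum : ∑' n, a n ≠ ⊤) :
    ∃ τ : ℕ → ℕ, (∀ n m, a n ≠ 0 → a m ≠ 0 → τ n = τ m → n = m) ∧
      ∀ n, a n ≠ 0 → ((τ n + 1 : ℕ) : ℝ≥0∞) * a n ≤ ∑' n, a n := by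
  classical
  set D : ℕ → Set ℕ := fun n => {m | a n < a m} ∪ {m | m ≤ n ∧ a m = a n} with hD
  have hsubset : ∀ n, D n ⊆ {m | a n ≤ a m} := by
    intro n m hm
    simp only [hD, Set.mem_union, Set.mem_setOf_eq] at hm
    rcases hm with hm | hm
    · exact le_of_lt hm
    · exact le_of_eq hm.2.symm
  have hfin : ∀ n, a n ≠ 0 → (D n).Finite := fun n hn =>
    (ENNReal.finite_const_le_of_tsum_ne_top hsum hn).subset (hsubset n)
  have hmem : ∀ n, n ∈ D n := fun n => Or.inr ⟨le_rfl, rfl⟩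
  have hkey : ∀ p q, a p ≠ 0 → a q ≠ 0 → (a p < a q ∨ (a p = a q ∧ p < q)) →
      (D p).ncard ≠ (D q).ncard := by
    rintro p q hp hq (hlt | ⟨heq, hlt⟩)
    · -- D q ⊊ D p
      have hss : D q ⊂ D p := by
        constructor
        · intro m hm
          have : a q ≤ a m := hsubset q hm
          exact Or.inl (lt_of_lt_of_le hlt this)
        · intro hsub
          have := hsubset q (hsub (hmem p))
          exact absurd this (not_le.2 hlt)
      exact (Set.ncard_lt_ncard hss (hfin p hp)).ne'
    · -- D p ⊊ D q
      have hss : D p ⊂ D q := by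
        constructor
        · rintro m (hm | ⟨hm1, hm2⟩)
          · exact Or.inl (heq ▸ hm)
          · exact Or.inr ⟨hm1.trans hlt.le, hm2.trans heq⟩
        · intro hsub
          have hq' := hsub (hmem q)
          simp only [hD, Set.mem_union, Set.mem_setOf_eq] at hq'
          rcases hq' with hm | ⟨hm1, _⟩
          · rw [heq] at hm; exact lt_irrefl _ hm
          · omega
      exact (Set.ncard_lt_ncard hss (hfin q hq)).ne
  refine ⟨fun n => (D n).ncard - 1, ?_, ?_⟩
  · intro n m hn hm hτ
    dsimp only at hτ
    by_contra hne
    have h1 : 0 < (D n).ncard := (Set.ncard_pos (hfin n hn)).2 ⟨n, hmem n⟩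
    have h2 : 0 < (D m).ncard := (Set.ncard_pos (hfin m hm)).2 ⟨m, hmem m⟩
    have hcard : (D n).ncard = (D m).ncard := by omega
    rcases lt_trichotomy (a n) (a m) with h | h | h
    · exact hkey n m hn hm (Or.inl h) hcard
    · rcases lt_trichotomy n m with h' | h' | h'
      · exact hkey n m hn hm (Or.inr ⟨h, h'⟩) hcard
      · exact hne h'
      · exact hkey m n hm hn (Or.inr ⟨h.symm, h'⟩) hcard.symm
    · exact hkey m n hm hn (Or.inl h) hcard.symm
  · intro n hn
    have hf := hfin n hn
    have h1 : 0 < (D n).ncard := (Set.ncard_pos hf).2 ⟨n, hmem n⟩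
    have hcard : ((D n).ncard - 1 + 1 : ℕ) = hf.toFinset.card := by
      rw [Set.ncard_eq_toFinset_card _ hf] at h1 ⊢; omega
    rw [hcard]
    calc (hf.toFinset.card : ℝ≥0∞) * a n = hf.toFinset.card • a n := by
          rw [nsmul_eq_mul]
      _ ≤ ∑ m ∈ hf.toFinset, a m := Finset.card_nsmul_le_sum _ _ _
          (fun m hm => hsubset n (hf.mem_toFinset.1 hm))
      _ ≤ ∑' m, a m := ENNReal.sum_le_tsum _

lemma key_chain (ε : ℝ) (hε : 0 < ε) (hε2 : ε ≤ 1/2) (d : ℝ) (hd0 : 0 < d)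
    (hd1 : d ≤ Real.exp (-1)) (m : ℕ)
    (h : ((m : ℝ) + 1) * (1 / |Real.log d|) < 1 / (2 * |Real.log ε|)) :
    2 * d ≤ ε ^ (2 * m + 1) := by
  have hε1 : ε < 1 := by linarith
  have hlε : Real.log ε < 0 := Real.log_neg hε hε1
  have hld : Real.log d ≤ -1 := by
    have := Real.log_le_log hd0 hd1
    rwa [Real.log_exp] at this
  rw [abs_of_neg (by linarith : Real.log d < 0), abs_of_neg hlε] at h
  have hMd : (0:ℝ) < -Real.log d := by linarith
  have hMε : (0:ℝ) < -Real.log ε := by linarith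
  have h' : ((m:ℝ)+1) / (-Real.log d) < 1 / (2 * (-Real.log ε)) := by
    rwa [mul_one_div] at h
  have h2 : ((m:ℝ)+1) * (2 * (-Real.log ε)) < 1 * (-Real.log d) :=
    (div_lt_div_iff₀ hMd (by linarith)).1 h'
  have h3 : Real.log d < ((2*m+2 : ℕ) : ℝ) * Real.log ε := by
    push_cast
    nlinarith
  have h4 : d < ε ^ (2*m+2) := by
    calc d = Real.exp (Real.log d) := (Real.exp_log hd0).symm
      _ < Real.exp (Real.log (ε ^ (2*m+2))) := by
          rw [Real.log_pow]; exact Real.exp_lt_exp.2 h3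
      _ = ε ^ (2*m+2) := Real.exp_log (by positivity)
  have h5 : ε ^ (2*m+2) = ε * ε ^ (2*m+1) := by ring
  nlinarith [pow_pos hε (2*m+1), mul_nonneg (by linarith : (0:ℝ) ≤ 1 - 2*ε)
    (pow_nonneg hε.le (2*m+1))]

theorem stmt17
    (ζ : ℝ → ℝ) (hζ0 : ζ 0 = 0)
    (hζ1 : ∀ r : ℝ, 0 < r → r ≤ Real.exp (-1) → ζ r = 1 / |Real.log r|)
    (hζ2 : ∀ r : ℝ, Real.exp (-1) < r → ζ r = 1)
    (E : Set ℝ) (hE : hausdorffGauge ζ E = 0) :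
    MicroscopicR E := by
  classical
  intro ε hεpos
  set ε' : ℝ := min ε (1/2) with hε'def
  have hε'pos : 0 < ε' := lt_min hεpos (by norm_num)
  have hε'le : ε' ≤ 1/2 := min_le_right _ _
  have hε'ε : ε' ≤ ε := min_le_left _ _
  set c : ℝ := 1 / (2 * |Real.log ε'|) with hcdef
  have hlogε' : Real.log ε' < 0 := Real.log_neg hε'pos (by linarith)
  have hcpos : 0 < c := by
    apply div_pos one_pos
    have : 0 < |Real.log ε'| := abs_pos.2 (ne_of_lt hlogε')
    linarith
  -- extract a cover with small ζ-sum and small diameters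
  have h0 : (⨅ (G : ℕ → Set ℝ) (_ : E ⊆ ⋃ n, G n)
      (_ : ∀ n, EMetric.diam (G n) ≤ ENNReal.ofReal (Real.exp (-1))),
      ∑' n, ENNReal.ofReal (ζ (EMetric.diam (G n)).toReal)) = 0 := by
    refine le_antisymm ?_ zero_le
    rw [← hE]
    simp only [hausdorffGauge]
    exact le_iSup₂ (f := fun (δ : ℝ) (_ : 0 < δ) => ⨅ (G : ℕ → Set ℝ) (_ : E ⊆ ⋃ n, G n)
      (_ : ∀ n, EMetric.diam (G n) ≤ ENNReal.ofReal δ),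
      ∑' n, ENNReal.ofReal (ζ (EMetric.diam (G n)).toReal)) (Real.exp (-1)) (Real.exp_pos _)
  have h2 : (⨅ (G : ℕ → Set ℝ) (_ : E ⊆ ⋃ n, G n)
      (_ : ∀ n, EMetric.diam (G n) ≤ ENNReal.ofReal (Real.exp (-1))),
      ∑' n, ENNReal.ofReal (ζ (EMetric.diam (G n)).toReal)) < ENNReal.ofReal c := by
    rw [h0]; exact ENNReal.ofReal_pos.2 hcpos
  rw [iInf_lt_iff] at h2; obtain ⟨G, h2⟩ := h2
  rw [iInf_lt_iff] at h2; obtain ⟨hcov, h2⟩ := h2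
  rw [iInf_lt_iff] at h2; obtain ⟨hdiam, hsum⟩ := h2
  set d : ℕ → ℝ := fun n => (EMetric.diam (G n)).toReal with hddef
  set a : ℕ → ℝ≥0∞ := fun n => ENNReal.ofReal (ζ (d n)) with hadef
  have hGtop : ∀ n, EMetric.diam (G n) ≠ ⊤ :=
    fun n => ne_top_of_le_ne_top ENNReal.ofReal_ne_top (hdiam n)
  have hd0 : ∀ n, 0 ≤ d n := fun n => ENNReal.toReal_nonneg
  have hdle : ∀ n, d n ≤ Real.exp (-1) := by
    intro n
    have := ENNReal.toReal_mono ENNReal.ofReal_ne_top (hdiam n)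
    rwa [ENNReal.toReal_ofReal (Real.exp_pos _).le] at this
  have hane : ∀ n, 0 < d n → a n ≠ 0 := by
    intro n hn
    have hζpos : 0 < ζ (d n) := by
      rw [hζ1 (d n) hn (hdle n)]
      have hld : Real.log (d n) ≤ -1 := by
        have := Real.log_le_log hn (hdle n)
        rwa [Real.log_exp] at this
      have : 0 < |Real.log (d n)| := abs_pos.2 (by linarith)
      positivity
    simp only [hadef, ne_eq, ENNReal.ofReal_eq_zero, not_le]
    exact hζpos
  have hsum' : ∑' n, a n ≠ ⊤ := (hsum.trans ENNReal.ofReal_lt_top).ne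
  obtain ⟨τ, hτinj, hτbd⟩ := rank_exists a hsum'
  set slot : ℕ → ℕ := fun n => if 0 < d n then 2 * τ n else 2 * n + 1 with hslotdef
  have hslotinj : Function.Injective slot := by
    intro n m h
    simp only [hslotdef] at h
    by_cases hn : 0 < d n <;> by_cases hm : 0 < d m <;>
      simp only [hn, hm, if_true, if_false] at h
    · exact hτinj n m (hane n hn) (hane m hm) (by omega)
    · omega
    · omega
    · omega
  refine ⟨fun k => if h : ∃ n, (G n).Nonempty ∧ slot n = k then
      (h.choose_spec.1.some - d h.choose, h.choose_spec.1.some + d h.choose)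
    else (1, 0), ?_, ?_⟩
  · -- coverage
    intro x hx
    have := hcov hx
    rw [Set.mem_iUnion] at this
    obtain ⟨n, hxn⟩ := this
    have hne : (G n).Nonempty := ⟨x, hxn⟩
    have hex : ∃ n', (G n').Nonempty ∧ slot n' = slot n := ⟨n, hne, rfl⟩
    refine Set.mem_iUnion.2 ⟨slot n, ?_⟩
    simp only [dif_pos hex]
    have heq : hex.choose = n := hslotinj hex.choose_spec.2
    set y : ℝ := hex.choose_spec.1.some with hydef
    have hy : y ∈ G hex.choose := hex.choose_spec.1.some_mem
    rw [heq] at hy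
    rw [heq]
    -- dist x y ≤ d n
    have hdist : dist x y ≤ d n := by
      have h1 : edist x y ≤ EMetric.diam (G n) := EMetric.edist_le_diam_of_mem hxn hy
      have := ENNReal.toReal_mono (hGtop n) h1
      rwa [← dist_edist] at this
    rw [Real.dist_eq] at hdist
    have habs := abs_le.1 hdist
    exact Set.mem_Icc.2 ⟨by linarith [habs.1], by linarith [habs.2]⟩
  · -- volume bounds
    intro k
    by_cases hk : ∃ n, (G n).Nonempty ∧ slot n = k
    · simp only [dif_pos hk]
      set n₀ := hk.choose with hn₀
      have hsl : slot n₀ = k := hk.choose_spec.2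
      set y : ℝ := hk.choose_spec.1.some with hydef
      rw [Real.volume_Icc]
      have harith : y + d n₀ - (y - d n₀) = 2 * d n₀ := by ring
      rw [harith]
      refine ENNReal.ofReal_le_ofReal ?_
      by_cases hdn : 0 < d n₀
      · -- the main case
        have hslk : 2 * τ n₀ = k := by
          rw [← hsl, hslotdef]; simp [hdn]
        have hbd := hτbd n₀ (hane n₀ hdn)
        have hbd2 : ((τ n₀ + 1 : ℕ) : ℝ≥0∞) * a n₀ < ENNReal.ofReal c :=
          lt_of_le_of_lt hbd hsum
        have hζeq : ζ (d n₀) = 1 / |Real.log (d n₀)| := hζ1 (d n₀) hdn (hdle n₀)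
        have hbd3 : ((τ n₀ : ℝ) + 1) * (1 / |Real.log (d n₀)|) < c := by
          rw [← ENNReal.ofReal_lt_ofReal_iff hcpos]
          calc ENNReal.ofReal (((τ n₀ : ℝ) + 1) * (1 / |Real.log (d n₀)|))
              = ((τ n₀ + 1 : ℕ) : ℝ≥0∞) * a n₀ := by
                rw [ENNReal.ofReal_mul (by positivity), hadef]
                simp only [hζeq]
                congr 1
                rw [← ENNReal.ofReal_natCast]
                congr 1
                push_cast
                ring
            _ < ENNReal.ofReal c := hbd2
        have hchain := key_chain ε' hε'pos hε'le (d n₀) hdn (hdle n₀) (τ n₀)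
          (by rw [hcdef] at hbd3; exact hbd3)
        calc 2 * d n₀ ≤ ε' ^ (2 * τ n₀ + 1) := hchain
          _ ≤ ε ^ (2 * τ n₀ + 1) := pow_le_pow_left₀ hε'pos.le hε'ε _
          _ = ε ^ (k + 1) := by rw [hslk]
      · -- degenerate set
        have hdz : d n₀ = 0 := le_antisymm (not_lt.1 hdn) (hd0 n₀)
        rw [hdz]
        have : (0:ℝ) < ε ^ (k+1) := pow_pos hεpos _
        linarith
    · simp only [dif_neg hk]
      rw [Real.volume_Icc]
      rw [ENNReal.ofReal_of_nonpos (by norm_num)]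
      exact zero_le
end
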